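/- arXiv:2107.00726 — 15 statements merged into one kernel-verified Lean document; each statement's English description precedes it below -/
import Mathlib

section
/- Let X be a nonempty set, Y ⊆ X nonempty, and let Ω̄(X,Y) = {f : X → X : f(Y) = Y} and S̄(X,Y) = {f : X → X : the restriction of f to Y is a bijection of Y}. Then the set of regular elements of the semigroup Ω̄(X,Y) (under composition) equals S̄(X,Y). -/
theorem stmt_1 {X : Type*} [Nonempty X] (Y : Set X) (hY : Y.Nonempty) :
    {f : X → X | f '' Y = Y ∧ ∃ g : X → X, g '' Y = Y ∧ f ∘ g ∘ f = f}
      = {f : X → X | Set.BijOn f Y Y} := by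
  ext f
  simp only [Set.mem_setOf_eq]
  constructor
  · rintro ⟨hfY, g, hgY, hfgf⟩
    have hmaps : Set.MapsTo f Y Y := by
      intro a ha
      rw [← hfY]; exact ⟨a, ha, rfl⟩
    have hsurj : Set.SurjOn f Y Y := by
      intro y hy
      rw [← hfY] at hy; exact hy
    refine ⟨hmaps, ?_, hsurj⟩
    -- first: f ∘ g = id on Y
    have key : ∀ y ∈ Y, f (g y) = y := by
      intro y hy
      rw [← hfY] at hy
      obtain ⟨a, ha, rfl⟩ := hy
      exact congrFun hfgf a
    intro a ha b hb hab
    rw [← hgY] at ha hb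
    obtain ⟨u, hu, rfl⟩ := ha
    obtain ⟨v, hv, rfl⟩ := hb
    rw [key u hu, key v hv] at hab
    rw [hab]
  · intro hbij
    classical
    have hfY : f '' Y = Y := hbij.image_eq
    refine ⟨hfY, fun x => if x ∈ Y then Function.invFunOn f Y x else Function.invFun f x,
      ?_, ?_⟩
    · ext y
      constructor
      · rintro ⟨a, ha, rfl⟩
        simp only []
        rw [if_pos ha]
        exact Function.invFunOn_mem (hbij.surjOn ha)
      · intro hy
        refine ⟨f y, hbij.mapsTo hy, ?_⟩
        simp only []
        rw [if_pos (hbij.mapsTo hy)]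
        exact hbij.injOn.leftInvOn_invFunOn hy
    · funext x
      simp only [Function.comp_apply]
      by_cases h : f x ∈ Y
      · rw [if_pos h]
        refine Function.invFunOn_eq ?_
        rw [← hfY] at h
        obtain ⟨a, ha, hfa⟩ := h
        exact ⟨a, ha, hfa⟩
      · rw [if_neg h]
        exact Function.invFun_eq ⟨x, rfl⟩
end

section
/- Let X be a nonempty set and Y ⊆ X nonempty. The semigroup Ω̄(X,Y) = {f : X → X : f(Y) = Y} is regular (every element is regular) if and only if Y is finite. -/
theorem stmt_2 {X : Type*} [Nonempty X] (Y : Set X) (hY : Y.Nonempty) :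
    (∀ f : X → X, f '' Y = Y → ∃ g : X → X, g '' Y = Y ∧ f ∘ g ∘ f = f)
      ↔ Y.Finite := by
  classical
  constructor
  · -- regular → finite
    intro h
    by_contra hfin
    have hinf : Y.Infinite := hfin
    haveI : Infinite Y := hinf.to_subtype
    set e := Infinite.natEmbedding Y with he
    set σ : X → X := fun x =>
      if hx : ∃ n, ((e (n + 1) : Y) : X) = x then ((e hx.choose : Y) : X) else x with hσ
    have key : ∀ n, σ ((e (n + 1) : Y) : X) = ((e n : Y) : X) := by
      intro n
      have hx : ∃ m, ((e (m + 1) : Y) : X) = ((e (n + 1) : Y) : X) := ⟨n, rfl⟩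
      have hc : hx.choose = n := by
        have h2 : e (hx.choose + 1) = e (n + 1) := Subtype.coe_injective hx.choose_spec
        exact Nat.succ_injective (e.injective h2)
      rw [hσ]
      simp only [dif_pos hx, hc]
    have key0 : σ ((e 0 : Y) : X) = ((e 0 : Y) : X) := by
      rw [hσ]
      simp only
      rw [dif_neg]
      rintro ⟨m, hm⟩
      have := e.injective (Subtype.coe_injective hm)
      omega
    have hσY : σ '' Y = Y := by
      apply Set.Subset.antisymm
      · rintro x ⟨y, hy, rfl⟩
        by_cases hx : ∃ n, ((e (n + 1) : Y) : X) = y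
        · rw [hσ]; simp only [dif_pos hx]; exact (e _).2
        · rw [hσ]; simp only [dif_neg hx]; exact hy
      · intro y hy
        by_cases hn : ∃ n, ((e n : Y) : X) = y
        · obtain ⟨n, rfl⟩ := hn
          exact ⟨((e (n + 1) : Y) : X), (e (n + 1)).2, key n⟩
        · refine ⟨y, hy, ?_⟩
          rw [hσ]
          simp only
          rw [dif_neg]
          rintro ⟨m, hm⟩
          exact hn ⟨m + 1, hm⟩
    obtain ⟨g, hg, hfgf⟩ := h σ hσY
    have hsection : ∀ y ∈ Y, σ (g y) = y := by
      intro y hy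
      have : y ∈ σ '' Y := by rw [hσY]; exact hy
      obtain ⟨x, _, rfl⟩ := this
      exact congrFun hfgf x
    have hinj : ∀ a ∈ Y, ∀ b ∈ Y, σ a = σ b → a = b := by
      intro a ha b hb hab
      have ha' : a ∈ g '' Y := by rw [hg]; exact ha
      have hb' : b ∈ g '' Y := by rw [hg]; exact hb
      obtain ⟨y₁, hy₁, rfl⟩ := ha'
      obtain ⟨y₂, hy₂, rfl⟩ := hb'
      rw [hsection y₁ hy₁, hsection y₂ hy₂] at hab
      rw [hab]
    have : ((e 0 : Y) : X) = ((e 1 : Y) : X) := by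
      apply hinj _ (e 0).2 _ (e 1).2
      rw [key0]
      have := key 0
      rw [this]
    have := e.injective (Subtype.coe_injective this)
    omega
  · -- finite → regular
    intro hfin f hf
    haveI : Finite Y := hfin.to_subtype
    have hmem : ∀ y ∈ Y, f y ∈ Y := fun y hy => hf ▸ Set.mem_image_of_mem f hy
    set F : Y → Y := fun y => ⟨f y, hmem y y.2⟩ with hF
    have hFsurj : Function.Surjective F := by
      intro y
      have : (y : X) ∈ f '' Y := by rw [hf]; exact y.2
      obtain ⟨x, hx, hfx⟩ := this
      exact ⟨⟨x, hx⟩, Subtype.ext hfx⟩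
    have hFbij : Function.Bijective F :=
      ⟨Finite.injective_iff_surjective.mpr hFsurj, hFsurj⟩
    set E := Equiv.ofBijective F hFbij with hE
    set g : X → X := fun z =>
      if h : z ∈ Y then ((E.symm ⟨z, h⟩ : Y) : X)
      else if h' : ∃ x, f x = z then h'.choose else Classical.arbitrary X with hgdef
    refine ⟨g, ?_, ?_⟩
    · apply Set.Subset.antisymm
      · rintro x ⟨y, hy, rfl⟩
        rw [hgdef]
        simp only [dif_pos hy]
        exact (E.symm ⟨y, hy⟩).2
      · intro y hy
        refine ⟨((E ⟨y, hy⟩ : Y) : X), (E ⟨y, hy⟩).2, ?_⟩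
        rw [hgdef]
        simp only [dif_pos (E ⟨y, hy⟩).2]
        have : (⟨((E ⟨y, hy⟩ : Y) : X), (E ⟨y, hy⟩).2⟩ : Y) = E ⟨y, hy⟩ := Subtype.ext rfl
        rw [this, E.symm_apply_apply]
    · funext x
      simp only [Function.comp_apply]
      by_cases hz : f x ∈ Y
      · rw [hgdef]
        simp only [dif_pos hz]
        have : f ((E.symm ⟨f x, hz⟩ : Y) : X) = ((F (E.symm ⟨f x, hz⟩) : Y) : X) := rfl
        rw [this]
        have h2 : F (E.symm ⟨f x, hz⟩) = E (E.symm ⟨f x, hz⟩) := rfl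
        rw [h2, E.apply_symm_apply]
      · have h' : ∃ x', f x' = f x := ⟨x, rfl⟩
        rw [hgdef]
        simp only [dif_neg hz, dif_pos h']
        exact h'.choose_spec
end

section
/- Let X be a nonempty set, Y ⊆ X nonempty, and f ∈ S̄(X,Y) = {f : X → X : f restricted to Y is a bijection of Y}. Then f is unit-regular in S̄(X,Y) if and only if there exists a transversal T_f of ker(f) with Y ⊆ T_f and |X \ T_f| = |X \ f(X)|. -/
/-- A transversal of ker(f): a set containing exactly one element of each ker(f)-class. -/
def IsTransversal {X : Type*} (f : X → X) (T : Set X) : Prop :=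
  ∀ x : X, ∃! t, t ∈ T ∧ f t = f x

theorem stmt_4 {X : Type*} [Nonempty X] (Y : Set X) (hY : Y.Nonempty)
    (f : X → X) (hf : Set.BijOn f Y Y) :
    (∃ g : X → X, Function.Bijective g ∧ g '' Y = Y ∧ f ∘ g ∘ f = f)
      ↔ ∃ T : Set X, IsTransversal f T ∧ Y ⊆ T ∧
          Cardinal.mk ↥(Tᶜ) = Cardinal.mk ↥((Set.range f)ᶜ) := by
  constructor
  · rintro ⟨g, hg, hgY, hfgf⟩
    refine ⟨g '' Set.range f, ?_, ?_, ?_⟩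
    · intro x
      refine ⟨g (f x), ⟨⟨f x, ⟨x, rfl⟩, rfl⟩, congrFun hfgf x⟩, ?_⟩
      rintro t ⟨⟨z, ⟨y, rfl⟩, rfl⟩, ht⟩
      have h1 : f (g (f y)) = f y := congrFun hfgf y
      have h2 : f y = f x := h1 ▸ ht
      rw [h2]
    · intro y hy
      have : y ∈ g '' Y := hgY.symm ▸ hy
      obtain ⟨y', hy', rfl⟩ := this
      exact ⟨y', Set.image_subset_range f Y (hf.surjOn hy'), rfl⟩
    · rw [← Set.image_compl_eq hg]
      exact Cardinal.mk_image_eq hg.injective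
  · rintro ⟨T, hT, hYT, hcard⟩
    obtain ⟨e⟩ : Nonempty (↥((Set.range f)ᶜ) ≃ ↥(Tᶜ)) := Cardinal.eq.mp hcard.symm
    classical
    -- r x : the unique element of T in the fiber of x
    set r : X → X := fun x => (hT x).choose with hr
    have hrT : ∀ x, r x ∈ T := fun x => ((hT x).choose_spec.1).1
    have hrf : ∀ x, f (r x) = f x := fun x => ((hT x).choose_spec.1).2
    have hruniq : ∀ x t, t ∈ T → f t = f x → t = r x :=
      fun x t ht hft => (hT x).choose_spec.2 t ⟨ht, hft⟩
    have hrfix : ∀ t ∈ T, r t = t := fun t ht => (hruniq t t ht rfl).symm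
    set g : X → X := fun z =>
      if h : z ∈ Set.range f then r h.choose else ↑(e ⟨z, h⟩) with hgdef
    have hgf : ∀ x, g (f x) = r x := by
      intro x
      have h : f x ∈ Set.range f := ⟨x, rfl⟩
      have : g (f x) = r h.choose := dif_pos h
      rw [this]
      refine hruniq x _ (hrT _) ?_
      rw [hrf]
      exact h.choose_spec
    have hgout : ∀ z (h : z ∉ Set.range f), g z = ↑(e ⟨z, h⟩) := fun z h => dif_neg h
    refine ⟨g, ⟨?_, ?_⟩, ?_, ?_⟩
    · -- injective
      intro a b hab
      by_cases ha : a ∈ Set.range f <;> by_cases hb : b ∈ Set.range f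
      · obtain ⟨x, rfl⟩ := ha; obtain ⟨y, rfl⟩ := hb
        rw [hgf, hgf] at hab
        rw [← hrf x, ← hrf y, hab]
      · exfalso
        obtain ⟨x, rfl⟩ := ha
        rw [hgf, hgout b hb] at hab
        exact (e ⟨b, hb⟩).2 (hab ▸ hrT x)
      · exfalso
        obtain ⟨y, rfl⟩ := hb
        rw [hgf, hgout a ha] at hab
        exact (e ⟨a, ha⟩).2 (hab ▸ hrT y)
      · rw [hgout a ha, hgout b hb] at hab
        have := e.injective (Subtype.ext hab)
        exact congrArg Subtype.val this
    · -- surjective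
      intro w
      by_cases hw : w ∈ T
      · exact ⟨f w, by rw [hgf]; exact hrfix w hw⟩
      · obtain ⟨z, hz⟩ := e.surjective ⟨w, hw⟩
        exact ⟨z.1, by rw [hgout z.1 z.2, Subtype.coe_eta, hz]⟩
    · -- g '' Y = Y
      apply Set.Subset.antisymm
      · rintro _ ⟨y, hy, rfl⟩
        obtain ⟨w, hw, rfl⟩ := hf.surjOn hy
        rw [hgf, hrfix w (hYT hw)]
        exact hw
      · intro y hy
        refine ⟨f y, hf.mapsTo hy, ?_⟩
        rw [hgf, hrfix y (hYT hy)]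
    · -- f ∘ g ∘ f = f
      funext x
      show f (g (f x)) = f x
      rw [hgf, hrf]
end

section
/- Let X be a nonempty set and Y ⊆ X nonempty. The set of unit-regular elements of Ω̄(X,Y) = {f : X → X : f(Y) = Y} equals the set of unit-regular elements of S̄(X,Y) = {f : X → X : f|_Y is a bijection of Y}. -/
theorem stmt_5 {X : Type*} [Nonempty X] (Y : Set X) (hY : Y.Nonempty) :
    {f : X → X | f '' Y = Y ∧
        ∃ g : X → X, Function.Bijective g ∧ g '' Y = Y ∧ f ∘ g ∘ f = f}
      = {f : X → X | Set.BijOn f Y Y ∧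
        ∃ g : X → X, Function.Bijective g ∧ g '' Y = Y ∧ f ∘ g ∘ f = f} := by
  ext f
  simp only [Set.mem_setOf_eq]
  constructor
  · rintro ⟨him, g, hg, hgY, hfgf⟩
    -- e = g ∘ f satisfies e '' Y = Y and e is identity on Y
    have heY : (g ∘ f) '' Y = Y := by
      rw [Set.image_comp, him, hgY]
    have hfix : ∀ x, f (g (f x)) = f x := fun x => congrFun hfgf x
    have hid : ∀ y ∈ Y, g (f y) = y := by
      intro y hy
      rw [← heY] at hy
      obtain ⟨x, hx, rfl⟩ := hy
      show g (f (g (f x))) = g (f x)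
      rw [hfix]
    refine ⟨⟨?_, ?_, ?_⟩, g, hg, hgY, hfgf⟩
    · intro y hy
      rw [← him]; exact ⟨y, hy, rfl⟩
    · intro a ha b hb hab
      rw [← hid a ha, ← hid b hb, hab]
    · intro y hy
      rw [← him] at hy
      obtain ⟨x, hx, rfl⟩ := hy
      exact ⟨x, hx, rfl⟩
  · rintro ⟨hbij, h⟩
    exact ⟨hbij.image_eq, h⟩
end

section
/- If X \ Y is infinite, then there exists f : X → X fixing every point of Y (hence f ∈ S̄(X,Y)) that is not unit-regular in S̄(X,Y). -/
open Classical in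
lemma aux_inj_not_surj (α : Type*) [Infinite α] :
    ∃ j : α → α, Function.Injective j ∧ ¬ Function.Surjective j := by
  classical
  set e := Infinite.natEmbedding α with he
  refine ⟨fun x => if h : ∃ n, e n = x then e (h.choose + 1) else x, ?_, ?_⟩
  · intro a b hab
    by_cases ha : ∃ n, e n = a <;> by_cases hb : ∃ n, e n = b
    · simp only [dif_pos ha, dif_pos hb] at hab
      have := e.injective hab
      have h1 := ha.choose_spec; have h2 := hb.choose_spec
      have h3 : ha.choose = hb.choose := by omega
      rw [← h1, ← h2, h3]
    · simp only [dif_pos ha, dif_neg hb] at hab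
      exact absurd ⟨_, hab⟩ hb
    · simp only [dif_neg ha, dif_pos hb] at hab
      exact absurd ⟨_, hab.symm⟩ ha
    · simpa [dif_neg ha, dif_neg hb] using hab
  · intro hs
    obtain ⟨x, hx⟩ := hs (e 0)
    by_cases h : ∃ n, e n = x
    · simp only [dif_pos h] at hx
      exact Nat.succ_ne_zero _ (e.injective hx)
    · simp only [dif_neg h] at hx
      exact h ⟨0, hx.symm⟩

theorem stmt_6 {X : Type*} (Y : Set X) (hY : Y.Nonempty)
    (hinf : (Yᶜ : Set X).Infinite) :
    ∃ f : X → X, (∀ y ∈ Y, f y = y) ∧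
      ¬ ∃ g : X → X, Function.Bijective g ∧ g '' Y = Y ∧ f ∘ g ∘ f = f := by
  classical
  haveI : Infinite ↥(Yᶜ : Set X) := hinf.to_subtype
  obtain ⟨j, hjinj, hjns⟩ := aux_inj_not_surj ↥(Yᶜ : Set X)
  rw [Function.Surjective] at hjns
  push_neg at hjns
  obtain ⟨a, ha⟩ := hjns
  set f : X → X := fun x => if h : x ∈ Y then x else (j ⟨x, h⟩ : X) with hf
  have hfix : ∀ y ∈ Y, f y = y := fun y hy => dif_pos hy
  have hfinj : Function.Injective f := by
    intro u v huv
    by_cases hu : u ∈ Y <;> by_cases hv : v ∈ Y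
    · simpa [hf, dif_pos hu, dif_pos hv] using huv
    · simp only [hf, dif_pos hu, dif_neg hv] at huv
      exact absurd (huv ▸ hu) (j ⟨v, hv⟩).2
    · simp only [hf, dif_neg hu, dif_pos hv] at huv
      exact absurd (huv ▸ hv) (j ⟨u, hu⟩).2
    · simp only [hf, dif_neg hu, dif_neg hv] at huv
      exact congrArg Subtype.val (hjinj (Subtype.ext huv))
  have hfns : ¬ Function.Surjective f := by
    intro hs
    obtain ⟨x, hx⟩ := hs (a : X)
    by_cases h : x ∈ Y
    · rw [hf] at hx; simp only [dif_pos h] at hx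
      exact a.2 (hx ▸ h)
    · rw [hf] at hx; simp only [dif_neg h] at hx
      exact ha ⟨x, h⟩ (Subtype.ext hx)
  refine ⟨f, hfix, ?_⟩
  rintro ⟨g, hg, -, hcomp⟩
  apply hfns
  intro z
  refine ⟨g z, ?_⟩
  have : f (g (f (g z))) = f (g z) := congrFun hcomp (g z)
  have h2 : g (f (g z)) = g z := hfinj this
  exact hg.1 h2
end

section
/- Let X be a nonempty set and Y ⊆ X nonempty. The monoid Ω̄(X,Y) = {f : X → X : f(Y) = Y} is unit-regular if and only if X is finite. -/
open Classical in
/-- Any function injective on a subset of a finite type extends to a permutation. -/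
lemma exists_perm_extend_aux {α : Type*} [Finite α] (S : Set α) (u : α → α)
    (hu : Set.InjOn u S) : ∃ π : Equiv.Perm α, ∀ x ∈ S, π x = u x := by
  classical
  have := Fintype.ofFinite α
  let e1 : S ≃ (u '' S) := Equiv.Set.imageOfInjOn u S hu
  have hcard : Fintype.card (↥(Sᶜ)) = Fintype.card (↥((u '' S)ᶜ)) := by
    rw [Fintype.card_compl_set, Fintype.card_compl_set, Fintype.card_congr e1]
  let e2 : (↥(Sᶜ)) ≃ (↥((u '' S)ᶜ)) := Fintype.equivOfCardEq hcard
  refine ⟨(Equiv.Set.sumCompl S).symm.trans ((e1.sumCongr e2).trans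
    (Equiv.Set.sumCompl (u '' S))), ?_⟩
  intro x hx
  have h1 : (Equiv.Set.sumCompl S).symm x = Sum.inl ⟨x, hx⟩ :=
    Equiv.Set.sumCompl_symm_apply_of_mem hx
  simp [Equiv.trans_apply, h1, e1, Equiv.Set.imageOfInjOn]

theorem stmt_8 {X : Type*} [Nonempty X] (Y : Set X) (hY : Y.Nonempty) :
    (∀ f : X → X, f '' Y = Y →
        ∃ g : X → X, Function.Bijective g ∧ g '' Y = Y ∧ f ∘ g ∘ f = f)
      ↔ Finite X := by
  classical
  constructor
  · intro H
    by_contra hfin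
    have : Infinite X := not_finite_iff_infinite.mp hfin
    by_cases hYi : Y.Infinite
    · -- use a "predecessor" surjection supported inside Y
      obtain ⟨e⟩ : Nonempty (ℕ ↪ Y) := ⟨hYi.natEmbedding⟩
      set E : ℕ → X := fun n => (e n : X) with hE
      have hEinj : Function.Injective E := fun a b h => e.injective (Subtype.ext h)
      have hEY : ∀ n, E n ∈ Y := fun n => (e n).2
      set P : ℕ → X := fun n => Nat.casesOn n (E 0) (fun m => E m) with hP
      set f : X → X := fun x => if h : ∃ n, E n = x then P h.choose else x with hfdef
      have hfE : ∀ n, f (E n) = P n := by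
        intro n
        have h : ∃ m, E m = E n := ⟨n, rfl⟩
        have : h.choose = n := hEinj h.choose_spec
        simp only [hfdef, dif_pos h, this]
      have hPY : ∀ n, P n ∈ Y := by
        intro n; cases n <;> exact hEY _
      have hfY : f '' Y = Y := by
        apply Set.Subset.antisymm
        · rintro _ ⟨y, hy, rfl⟩
          simp only [hfdef]
          split
          · exact hPY _
          · exact hy
        · intro y hy
          by_cases h : ∃ n, E n = y
          · obtain ⟨n, rfl⟩ := h
            exact ⟨E (n + 1), hEY _, hfE (n + 1)⟩
          · exact ⟨y, hy, by simp only [hfdef, dif_neg h]⟩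
      have hfsurj : Function.Surjective f := by
        intro y
        by_cases h : ∃ n, E n = y
        · obtain ⟨n, rfl⟩ := h
          exact ⟨E (n + 1), hfE (n + 1)⟩
        · exact ⟨y, by simp only [hfdef, dif_neg h]⟩
      obtain ⟨g, hgbij, -, hgf⟩ := H f hfY
      have key : ∀ z, f (g z) = z := by
        intro z
        obtain ⟨x, rfl⟩ := hfsurj z
        exact congrFun hgf x
      obtain ⟨a, ha⟩ := hgbij.2 (E 0)
      obtain ⟨b, hb⟩ := hgbij.2 (E 1)
      have ha' : a = E 0 := by
        have := key a; rw [ha, hfE 0] at this; exact this.symm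
      have hb' : b = E 0 := by
        have := key b; rw [hb, hfE 1] at this; exact this.symm
      have : E 0 = E 1 := by rw [← ha, ← hb, ha', hb']
      exact absurd (hEinj this) (by norm_num)
    · -- Y finite, so Yᶜ infinite; use a shift outside Y
      have hYc : (Yᶜ : Set X).Infinite :=
        (Set.not_infinite.mp hYi).infinite_compl
      obtain ⟨e⟩ : Nonempty (ℕ ↪ ↥(Yᶜ : Set X)) := ⟨hYc.natEmbedding⟩
      set E : ℕ → X := fun n => (e n : X) with hE
      have hEinj : Function.Injective E := fun a b h => e.injective (Subtype.ext h)
      have hEY : ∀ n, E n ∉ Y := fun n => (e n).2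
      set f : X → X := fun x => if h : ∃ n, E n = x then E (h.choose + 1) else x with hfdef
      have hfE : ∀ n, f (E n) = E (n + 1) := by
        intro n
        have h : ∃ m, E m = E n := ⟨n, rfl⟩
        have : h.choose = n := hEinj h.choose_spec
        simp only [hfdef, dif_pos h, this]
      have hfY : f '' Y = Y := by
        have hid : ∀ y ∈ Y, f y = y := by
          intro y hy
          have h : ¬∃ n, E n = y := by
            rintro ⟨n, rfl⟩; exact hEY n hy
          simp only [hfdef, dif_neg h]
        apply Set.Subset.antisymm
        · rintro _ ⟨y, hy, rfl⟩; rw [hid y hy]; exact hy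
        · intro y hy; exact ⟨y, hy, hid y hy⟩
      obtain ⟨g, hgbij, -, hgf⟩ := H f hfY
      have hfinj : Function.Injective f := by
        intro x₁ x₂ h
        by_cases h1 : ∃ n, E n = x₁ <;> by_cases h2 : ∃ n, E n = x₂
        · obtain ⟨n, rfl⟩ := h1; obtain ⟨m, rfl⟩ := h2
          rw [hfE, hfE] at h
          have := hEinj h
          exact congrArg E (by omega : n = m)
        · obtain ⟨n, rfl⟩ := h1
          rw [hfE] at h
          simp only [hfdef, dif_neg h2] at h
          exact absurd ⟨n + 1, h⟩ h2
        · obtain ⟨m, rfl⟩ := h2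
          rw [hfE] at h
          simp only [hfdef, dif_neg h1] at h
          exact absurd ⟨m + 1, h.symm⟩ h1
        · simpa only [hfdef, dif_neg h1, dif_neg h2] using h
      have key : ∀ x, g (f x) = x := by
        intro x
        exact hfinj (congrFun hgf x)
      have hfsurj : Function.Surjective f := by
        intro y
        refine ⟨g y, hgbij.1 ?_⟩
        rw [key (g y)]
      obtain ⟨x, hx⟩ := hfsurj (E 0)
      by_cases h : ∃ n, E n = x
      · obtain ⟨n, rfl⟩ := h
        rw [hfE] at hx
        exact absurd (hEinj hx) (by omega)
      · simp only [hfdef, dif_neg h] at hx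
        exact h ⟨0, hx.symm⟩
  · intro hfin f hf
    have hYr : Y ⊆ Set.range f := by
      conv_lhs => rw [← hf]
      exact Set.image_subset_range f Y
    have hchoice : ∀ z : X, ∃ w : X, (z ∈ Set.range f → f w = z) ∧ (z ∈ Y → w ∈ Y) := by
      intro z
      by_cases hz : z ∈ Y
      · have : z ∈ f '' Y := by rw [hf]; exact hz
        obtain ⟨w, hw, hwz⟩ := this
        exact ⟨w, fun _ => hwz, fun _ => hw⟩
      · by_cases hr : z ∈ Set.range f
        · obtain ⟨w, hw⟩ := hr
          exact ⟨w, fun _ => hw, fun h => absurd h hz⟩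
        · exact ⟨z, fun h => absurd h hr, fun h => absurd h hz⟩
    choose s hs1 hs2 using hchoice
    have hsnY : ∀ z, z ∈ Set.range f → z ∉ Y → s z ∉ Y := by
      intro z hr hz hsz
      have : f (s z) ∈ f '' Y := ⟨s z, hsz, rfl⟩
      rw [hs1 z hr, hf] at this
      exact hz this
    -- permutation on Y
    have hYfin : Finite ↥Y := Subtype.finite
    set t : ↥Y → ↥Y := fun z => ⟨s z, hs2 z z.2⟩ with ht
    have htinj : Function.Injective t := by
      rintro ⟨z₁, h₁⟩ ⟨z₂, h₂⟩ h
      have h' : s z₁ = s z₂ := congrArg Subtype.val h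
      have := congrArg f h'
      rw [hs1 z₁ (hYr h₁), hs1 z₂ (hYr h₂)] at this
      exact Subtype.ext this
    have htbij : Function.Bijective t := (Finite.injective_iff_bijective).mp htinj
    set e₁ : Equiv.Perm ↥Y := Equiv.ofBijective t htbij with he₁
    -- permutation off Y
    have hNfin : Finite {x : X // x ∉ Y} := Subtype.finite
    set u : {x : X // x ∉ Y} → {x : X // x ∉ Y} := fun z =>
      if h : (z : X) ∈ Set.range f then ⟨s z, hsnY z h z.2⟩ else z with hu
    have huinj : Set.InjOn u {z : {x : X // x ∉ Y} | (z : X) ∈ Set.range f} := by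
      intro z₁ hz₁ z₂ hz₂ h
      have hr₁ : (z₁ : X) ∈ Set.range f := hz₁
      have hr₂ : (z₂ : X) ∈ Set.range f := hz₂
      simp only [hu, dif_pos hr₁, dif_pos hr₂] at h
      have h' : s z₁ = s z₂ := congrArg Subtype.val h
      have := congrArg f h'
      rw [hs1 z₁ hr₁, hs1 z₂ hr₂] at this
      exact Subtype.ext this
    obtain ⟨π, hπ⟩ := exists_perm_extend_aux _ u huinj
    set g : Equiv.Perm X := Equiv.Perm.subtypeCongr e₁ π with hg
    have hgY : ∀ y, (hy : y ∈ Y) → g y = s y := by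
      intro y hy
      rw [hg, Equiv.Perm.subtypeCongr.left_apply e₁ π hy]
      rfl
    have hgN : ∀ z, (hz : z ∉ Y) → z ∈ Set.range f → g z = s z := by
      intro z hz hr
      rw [hg, Equiv.Perm.subtypeCongr.right_apply e₁ π hz, hπ ⟨z, hz⟩ hr]
      simp only [hu, dif_pos hr]
    refine ⟨g, g.bijective, ?_, ?_⟩
    · apply Set.Subset.antisymm
      · rintro _ ⟨y, hy, rfl⟩
        rw [hgY y hy]
        exact hs2 y hy
      · intro y hy
        obtain ⟨⟨w, hw⟩, hww⟩ := htbij.2 ⟨y, hy⟩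
        refine ⟨w, hw, ?_⟩
        rw [hgY w hw]
        exact congrArg Subtype.val hww
    · funext x
      have hr : f x ∈ Set.range f := ⟨x, rfl⟩
      by_cases hfx : f x ∈ Y
      · show f (g (f x)) = f x
        rw [hgY _ hfx, hs1 _ hr]
      · show f (g (f x)) = f x
        rw [hgN _ hfx hr, hs1 _ hr]
end

section
/- The semigroup Fix(X,Y) = {f : X → X : f(y) = y for all y ∈ Y} is regular: for every f ∈ Fix(X,Y) there exists g ∈ Fix(X,Y) with f g f = f. -/
theorem stmt_10 {X : Type*} (Y : Set X) (hY : Y.Nonempty) :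
    ∀ f : X → X, (∀ y ∈ Y, f y = y) →
      ∃ g : X → X, (∀ y ∈ Y, g y = y) ∧ f ∘ g ∘ f = f := by
  intro f hf
  classical
  refine ⟨fun z => if z ∈ Y then z else if h : ∃ x, f x = z then h.choose else z, ?_, ?_⟩
  · intro y hy; simp [hy]
  · funext x
    simp only [Function.comp_apply]
    by_cases hz : f x ∈ Y
    · simp only [hz, if_pos]
      exact hf _ hz
    · have h : ∃ x', f x' = f x := ⟨x, rfl⟩
      rw [if_neg hz, dif_pos h, h.choose_spec]
end

section
/- The monoid Fix(X,Y) = {f : X → X : f(y) = y for all y ∈ Y} is unit-regular if and only if X \ Y is finite. -/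
open Classical in
lemma extend_perm {Z : Type*} [Finite Z] (u : Z → Z) (A : Set Z) (h : A.InjOn u) :
    ∃ π : Equiv.Perm Z, ∀ z ∈ A, π z = u z := by
  classical
  cases nonempty_fintype Z
  let e₁ : A ≃ (u '' A : Set Z) := Equiv.Set.imageOfInjOn u A h
  have hcard : Fintype.card (↥(Aᶜ : Set Z)) = Fintype.card (↥((u '' A)ᶜ : Set Z)) := by
    rw [Fintype.card_compl_set, Fintype.card_compl_set, Fintype.card_congr e₁]
  obtain ⟨e₂⟩ := Fintype.card_eq.mp hcard
  refine ⟨(Equiv.Set.sumCompl A).symm.trans ((e₁.sumCongr e₂).trans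
    (Equiv.Set.sumCompl (u '' A))), fun z hz => ?_⟩
  simp [Equiv.Set.sumCompl_symm_apply_of_mem hz, e₁, Equiv.Set.imageOfInjOn]

theorem stmt_11 {X : Type*} (Y : Set X) (hY : Y.Nonempty) :
    (∀ f : X → X, (∀ y ∈ Y, f y = y) →
        ∃ g : X → X, Function.Bijective g ∧ (∀ y ∈ Y, g y = y) ∧ f ∘ g ∘ f = f)
      ↔ (Yᶜ : Set X).Finite := by
  classical
  constructor
  · -- unit-regular → Yᶜ finite
    intro H
    by_contra hInf
    have hInf : (Yᶜ : Set X).Infinite := hInf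
    let e : ℕ ↪ ↥(Yᶜ : Set X) := hInf.natEmbedding
    have ecoe : Function.Injective (fun n => (e n : X)) := by
      intro a b hab
      exact e.injective (Subtype.coe_injective hab)
    set f : X → X := fun x =>
      if h : ∃ n, (e (n + 1) : X) = x then (e (Classical.choose h) : X) else x with hfdef
    have hfe : ∀ n, f (e (n + 1) : X) = (e n : X) := by
      intro n
      have h : ∃ m, (e (m + 1) : X) = (e (n + 1) : X) := ⟨n, rfl⟩
      have := Classical.choose_spec h
      have hc : Classical.choose h = n := Nat.succ_injective (ecoe this)
      simp only [hfdef, dif_pos h, hc]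
    have hfY : ∀ y ∈ Y, f y = y := by
      intro y hy
      have : ¬ ∃ n, (e (n + 1) : X) = y := by
        rintro ⟨n, hn⟩
        exact (e (n + 1)).2 (hn ▸ hy)
      simp only [hfdef, dif_neg this]
    have hfe0 : f (e 0 : X) = (e 0 : X) := by
      have : ¬ ∃ n, (e (n + 1) : X) = (e 0 : X) := by
        rintro ⟨n, hn⟩
        exact Nat.succ_ne_zero n (ecoe hn)
      simp only [hfdef, dif_neg this]
    have hsurj : Function.Surjective f := by
      intro x
      by_cases h : ∃ n, (e n : X) = x
      · obtain ⟨n, hn⟩ := h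
        cases n with
        | zero => exact ⟨(e 0 : X), hn ▸ hfe0⟩
        | succ m => exact ⟨(e (m + 2) : X), hn ▸ hfe (m + 1)⟩
      · refine ⟨x, ?_⟩
        have : ¬ ∃ n, (e (n + 1) : X) = x := fun ⟨n, hn⟩ => h ⟨n + 1, hn⟩
        simp only [hfdef, dif_neg this]
    obtain ⟨g, hgbij, -, hfgf⟩ := H f hfY
    have hfg : ∀ z, f (g z) = z := by
      intro z
      obtain ⟨x, rfl⟩ := hsurj z
      exact congrFun hfgf x
    have hfinj : Function.Injective f := by
      intro a b hab
      obtain ⟨a', rfl⟩ := hgbij.2 a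
      obtain ⟨b', rfl⟩ := hgbij.2 b
      rw [hfg, hfg] at hab
      rw [hab]
    have h01 : f (e 1 : X) = f (e 0 : X) := by rw [hfe 0, hfe0]
    have := hfinj h01
    exact Nat.one_ne_zero (ecoe this)
  · -- Yᶜ finite → unit-regular
    intro hfin f hf
    have : Finite ↥(Yᶜ : Set X) := hfin.to_subtype
    set s : X → X := fun x =>
      if x ∈ Y then x else if h : ∃ a, f a = x then Classical.choose h else x with hsdef
    have hfs : ∀ x ∈ Set.range f, f (s x) = x := by
      rintro x ⟨a, rfl⟩
      by_cases h : f a ∈ Y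
      · simp only [hsdef, if_pos h]
        exact hf _ h
      · have hex : ∃ b, f b = f a := ⟨a, rfl⟩
        simp only [hsdef, if_neg h, dif_pos hex]
        exact Classical.choose_spec hex
    have hsc : ∀ x ∈ (Yᶜ : Set X), s x ∈ (Yᶜ : Set X) := by
      intro x hx
      simp only [Set.mem_compl_iff] at hx ⊢
      by_cases h : ∃ a, f a = x
      · simp only [hsdef, if_neg hx, dif_pos h]
        intro hc
        have h2 : Classical.choose h = x := (hf _ hc).symm.trans (Classical.choose_spec h)
        exact hx (h2 ▸ hc)
      · simp only [hsdef, if_neg hx, dif_neg h]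
        exact hx
    set u : ↥(Yᶜ : Set X) → ↥(Yᶜ : Set X) := fun z => ⟨s z, hsc z z.2⟩ with hudef
    set A : Set ↥(Yᶜ : Set X) := {z | (z : X) ∈ Set.range f} with hAdef
    have hInj : A.InjOn u := by
      intro z₁ h₁ z₂ h₂ h12
      have : s (z₁ : X) = s (z₂ : X) := Subtype.ext_iff.mp h12
      have : ((z₁ : X)) = ((z₂ : X)) := by
        rw [← hfs _ h₁, ← hfs _ h₂, this]
      exact Subtype.ext this
    obtain ⟨π, hπ⟩ := extend_perm u A hInj
    set g : X → X := fun x =>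
      if h : x ∈ (Yᶜ : Set X) then (π ⟨x, h⟩ : X) else x with hgdef
    have hgY : ∀ y ∈ Y, g y = y := by
      intro y hy
      simp only [hgdef]
      exact dif_neg (fun hc => hc hy)
    refine ⟨g, ?_, hgY, ?_⟩
    · rw [Function.bijective_iff_has_inverse]
      refine ⟨fun x => if h : x ∈ (Yᶜ : Set X) then (π.symm ⟨x, h⟩ : X) else x, ?_, ?_⟩
      · intro x
        by_cases h : x ∈ (Yᶜ : Set X)
        · simp only [hgdef, dif_pos h, dif_pos (π ⟨x, h⟩).2, Subtype.coe_eta,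
            Equiv.symm_apply_apply]
        · simp only [hgdef, dif_neg h]
      · intro x
        by_cases h : x ∈ (Yᶜ : Set X)
        · simp only [hgdef, dif_pos h, dif_pos (π.symm ⟨x, h⟩).2, Subtype.coe_eta,
            Equiv.apply_symm_apply]
        · simp only [hgdef, dif_neg h]
    · funext x
      simp only [Function.comp_apply]
      by_cases h : f x ∈ Y
      · rw [hgY _ h, hf _ h]
      · have hmem : f x ∈ (Yᶜ : Set X) := h
        have hA : (⟨f x, hmem⟩ : ↥(Yᶜ : Set X)) ∈ A := ⟨x, rfl⟩
        have : g (f x) = s (f x) := by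
          simp only [hgdef, dif_pos hmem]
          rw [hπ _ hA]
        rw [this, hfs _ ⟨x, rfl⟩]
end

section
/- Let f, g ∈ Ω̄(X,Y) = {h : X → X : h(Y) = Y}. Then f = h ∘ g for some h ∈ Ω̄(X,Y) (with h applied first, i.e., f(x) = g(h(x)) using right-action notation f = hg meaning x(hg) = (xh)g) if and only if (i) f(X) ⊆ g(X) and (ii) for every y ∈ Y, the cardinality of the fiber of y under f|_Y : Y → Y is at least the cardinality of the fiber of y under g|_Y. -/
theorem stmt_12 {X : Type*} (Y : Set X) (hY : Y.Nonempty)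
    (f g : X → X) (hf : f '' Y = Y) (hg : g '' Y = Y) :
    (∃ h : X → X, h '' Y = Y ∧ f = g ∘ h)
      ↔ Set.range f ⊆ Set.range g ∧
        ∀ y ∈ Y, Cardinal.mk ↥{w ∈ Y | g w = y} ≤ Cardinal.mk ↥{w ∈ Y | f w = y} := by
  classical
  constructor
  · rintro ⟨h, hh, rfl⟩
    constructor
    · rintro _ ⟨x, rfl⟩; exact ⟨h x, rfl⟩
    · intro y hy
      have step : ∀ w : ↥{w ∈ Y | (g ∘ h) w = y}, h ↑w ∈ {w ∈ Y | g w = y} := by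
        rintro ⟨w, hwY, hwf⟩
        exact ⟨by have := Set.mem_image_of_mem h hwY; rwa [hh] at this, hwf⟩
      refine Cardinal.mk_le_of_surjective (f := fun w => (⟨h ↑w, step w⟩ : ↥{w ∈ Y | g w = y})) ?_
      rintro ⟨v, hvY, hvg⟩
      have : v ∈ h '' Y := by rw [hh]; exact hvY
      obtain ⟨w, hwY, hwv⟩ := this
      refine ⟨⟨w, hwY, ?_⟩, ?_⟩
      · show g (h w) = y
        rw [hwv, hvg]
      · exact Subtype.ext hwv
  · rintro ⟨hr, hcard⟩
    have key : ∀ y : X, ∃ σy : ↥{w ∈ Y | f w = y} → ↥{w ∈ Y | g w = y},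
        y ∈ Y → Function.Surjective σy := by
      intro y
      by_cases hy : y ∈ Y
      · have hne : Nonempty ↥{w ∈ Y | g w = y} := by
          have : y ∈ g '' Y := by rw [hg]; exact hy
          obtain ⟨w, hw, hwy⟩ := this
          exact ⟨⟨w, hw, hwy⟩⟩
        obtain ⟨e⟩ := Cardinal.le_def _ _ |>.mp (hcard y hy)
        exact ⟨Function.invFun e, fun _ => Function.invFun_surjective e.injective⟩
      · refine ⟨fun u => absurd ?_ hy, fun hyY => absurd hyY hy⟩
        have : f ↑u ∈ Y := by have := Set.mem_image_of_mem f u.2.1; rwa [hf] at this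
        rwa [u.2.2] at this
    choose σ hσ using key
    have hzx : ∀ x, ∃ z, g z = f x := fun x => hr ⟨x, rfl⟩
    choose z hz using hzx
    set h : X → X := fun x =>
      if hxY : x ∈ Y then (σ (f x) ⟨x, hxY, rfl⟩ : X) else z x with hdef
    have hgen : ∀ (w : X) (hwY : w ∈ Y) (y : X) (hy : f w = y),
        (σ y ⟨w, hwY, hy⟩ : X) = (σ (f w) ⟨w, hwY, rfl⟩ : X) := by
      rintro w hwY y rfl; rfl
    have hmem : ∀ x (hxY : x ∈ Y), h x ∈ {w ∈ Y | g w = f x} := by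
      intro x hxY
      simp only [hdef, dif_pos hxY]
      exact (σ (f x) ⟨x, hxY, rfl⟩).2
    refine ⟨h, ?_, ?_⟩
    · apply Set.Subset.antisymm
      · rintro _ ⟨x, hxY, rfl⟩
        exact (hmem x hxY).1
      · intro v hvY
        have hgvY : g v ∈ Y := by rw [← hg]; exact Set.mem_image_of_mem g hvY
        obtain ⟨⟨w, hwY, hwf⟩, hu⟩ := hσ (g v) hgvY ⟨v, hvY, rfl⟩
        refine ⟨w, hwY, ?_⟩
        have h1 : h w = (σ (f w) ⟨w, hwY, rfl⟩ : X) := by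
          simp only [hdef, dif_pos hwY]
        rw [h1, ← hgen w hwY (g v) hwf]
        exact congrArg Subtype.val hu
    · funext x
      by_cases hxY : x ∈ Y
      · exact ((hmem x hxY).2).symm
      · simp only [Function.comp, hdef, dif_neg hxY]
        exact (hz x).symm
end

section
/- Let f, g ∈ Ω̄(X,Y). Then f and g are L-related in Ω̄(X,Y) if and only if f(X) = g(X) and for every y ∈ Y, the fiber of y under f|_Y and the fiber of y under g|_Y have equal cardinality. -/
/-- If `f = g ∘ h` with `h '' Y = Y`, then each `g`-fiber over `y ∈ Y` (within `Y`)
has cardinality at most that of the corresponding `f`-fiber. -/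
theorem stmt13_fiber_le {X : Type*} (Y : Set X) (f g h : X → X)
    (hh : h '' Y = Y) (hfgh : f = g ∘ h) (y : X) :
    Cardinal.mk ↥{w ∈ Y | g w = y} ≤ Cardinal.mk ↥{w ∈ Y | f w = y} := by
  have hhY : ∀ x ∈ Y, h x ∈ Y := fun x hx => hh ▸ Set.mem_image_of_mem h hx
  let F : {w ∈ Y | f w = y} → {w ∈ Y | g w = y} := fun w =>
    ⟨h w.1, hhY w.1 w.2.1, by
      have := congrFun hfgh w.1
      simp only [Function.comp_apply] at this
      rw [← this]; exact w.2.2⟩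
  have hsurj : Function.Surjective F := by
    rintro ⟨v, hvY, hgv⟩
    obtain ⟨w, hwY, hwv⟩ : v ∈ h '' Y := hh.symm ▸ hvY
    have hfw : f w = y := by
      have := congrFun hfgh w
      simp only [Function.comp_apply] at this
      rw [this, hwv]; exact hgv
    exact ⟨⟨w, hwY, hfw⟩, Subtype.ext hwv⟩
  exact Cardinal.mk_le_of_surjective hsurj

/-- Construction of `h` with `h '' Y = Y` and `f = g ∘ h` from equal ranges and
equinumerous fibers. -/
theorem stmt13_exists_h {X : Type*} (Y : Set X) (f g : X → X)
    (hf : f '' Y = Y) (hg : g '' Y = Y)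
    (hr : Set.range f = Set.range g)
    (hc : ∀ y ∈ Y, Cardinal.mk ↥{w ∈ Y | f w = y} = Cardinal.mk ↥{w ∈ Y | g w = y}) :
    ∃ h : X → X, h '' Y = Y ∧ f = g ∘ h := by
  classical
  have key : ∀ y, y ∈ Y → Nonempty ({w ∈ Y | f w = y} ≃ {w ∈ Y | g w = y}) :=
    fun y hy => Cardinal.eq.mp (hc y hy)
  let e : ∀ y, y ∈ Y → ({w ∈ Y | f w = y} ≃ {w ∈ Y | g w = y}) :=
    fun y hy => (key y hy).some
  have hfY : ∀ x ∈ Y, f x ∈ Y := fun x hx => hf ▸ Set.mem_image_of_mem f hx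
  have hgY : ∀ x ∈ Y, g x ∈ Y := fun x hx => hg ▸ Set.mem_image_of_mem g hx
  have hrange : ∀ x, ∃ v, g v = f x := fun x => by
    have : f x ∈ Set.range g := hr ▸ Set.mem_range_self x
    exact this
  let h : X → X := fun x =>
    if hx : x ∈ Y then ((e (f x) (hfY x hx)) ⟨x, hx, rfl⟩ : {w ∈ Y | g w = f x}).1
    else Classical.choose (hrange x)
  have congr_e : ∀ (y : X) (hy : y ∈ Y) (w : X) (hw : w ∈ Y) (hfw : f w = y),
      (((e (f w) (hfY w hw)) ⟨w, hw, rfl⟩ : {u ∈ Y | g u = f w}).1 : X)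
        = ((e y hy) ⟨w, hw, hfw⟩ : {u ∈ Y | g u = y}).1 := by
    intro y hy w hw hfw
    subst hfw
    rfl
  refine ⟨h, ?_, ?_⟩
  · apply Set.Subset.antisymm
    · rintro _ ⟨x, hx, rfl⟩
      show (if hx' : x ∈ Y then _ else _) ∈ Y
      rw [dif_pos hx]
      exact ((e (f x) (hfY x hx)) ⟨x, hx, rfl⟩).2.1
    · intro v hv
      have hgv : g v ∈ Y := hgY v hv
      set x := (e (g v) hgv).symm ⟨v, hv, rfl⟩ with hxdef
      refine ⟨x.1, x.2.1, ?_⟩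
      show (if hx' : x.1 ∈ Y then _ else _) = v
      rw [dif_pos x.2.1]
      rw [congr_e (g v) hgv x.1 x.2.1 x.2.2]
      have : (⟨x.1, x.2.1, x.2.2⟩ : {u ∈ Y | f u = g v}) = x := rfl
      rw [this, hxdef, Equiv.apply_symm_apply]
  · funext x
    simp only [Function.comp_apply]
    by_cases hx : x ∈ Y
    · show f x = g (if hx' : x ∈ Y then _ else _)
      rw [dif_pos hx]
      exact (((e (f x) (hfY x hx)) ⟨x, hx, rfl⟩).2.2).symm
    · show f x = g (if hx' : x ∈ Y then _ else _)
      rw [dif_neg hx]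
      exact (Classical.choose_spec (hrange x)).symm

theorem stmt_13 {X : Type*} (Y : Set X) (hY : Y.Nonempty)
    (f g : X → X) (hf : f '' Y = Y) (hg : g '' Y = Y) :
    ((∃ h : X → X, h '' Y = Y ∧ f = g ∘ h) ∧ (∃ h' : X → X, h' '' Y = Y ∧ g = f ∘ h'))
      ↔ Set.range f = Set.range g ∧
        ∀ y ∈ Y, Cardinal.mk ↥{w ∈ Y | f w = y} = Cardinal.mk ↥{w ∈ Y | g w = y} := by
  constructor
  · rintro ⟨⟨h, hhY, hfgh⟩, ⟨h', hh'Y, hgfh⟩⟩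
    constructor
    · apply Set.Subset.antisymm
      · rw [hfgh, Set.range_comp]
        exact Set.image_subset_range g _
      · rw [hgfh, Set.range_comp]
        exact Set.image_subset_range f _
    · intro y hy
      exact le_antisymm (stmt13_fiber_le Y g f h' hh'Y hgfh y)
        (stmt13_fiber_le Y f g h hhY hfgh y)
  · rintro ⟨hr, hc⟩
    exact ⟨stmt13_exists_h Y f g hf hg hr hc,
      stmt13_exists_h Y g f hg hf hr.symm (fun y hy => (hc y hy).symm)⟩
end

section
/- Let f, g ∈ Ω̄(X,Y). Then f and g are D-related in Ω̄(X,Y) if and only if |f(X) \ Y| = |g(X) \ Y| and there exists a bijection α : Y → Y such that for every y ∈ Y, the fiber of y under f|_Y and the fiber of α(y) under g|_Y have equal cardinality. -/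
/-- Membership in Ω̄(X,Y). -/
def OmegaBar {X : Type*} (Y : Set X) (f : X → X) : Prop := f '' Y = Y

/-- Green's L-relation on the monoid Ω̄(X,Y) (composition left to right: f = hg means f = g ∘ h). -/
def GreenL {X : Type*} (Y : Set X) (f g : X → X) : Prop :=
  (∃ h : X → X, OmegaBar Y h ∧ f = g ∘ h) ∧ (∃ h' : X → X, OmegaBar Y h' ∧ g = f ∘ h')

/-- Green's R-relation on the monoid Ω̄(X,Y). -/
def GreenR {X : Type*} (Y : Set X) (f g : X → X) : Prop :=
  (∃ h : X → X, OmegaBar Y h ∧ f = h ∘ g) ∧ (∃ h' : X → X, OmegaBar Y h' ∧ g = h' ∘ f)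

/-- Green's D-relation: D = L ∘ R. -/
def GreenD {X : Type*} (Y : Set X) (f g : X → X) : Prop :=
  ∃ k : X → X, OmegaBar Y k ∧ GreenL Y f k ∧ GreenR Y k g

set_option linter.unusedVariables false

private lemma e_cast {X : Type*} {Y : Set X} {f k : X → X}
    (e : ∀ y : X, ↥{w ∈ Y | f w = y} ≃ ↥{w ∈ Y | k w = y})
    {w y : X} (hw : w ∈ Y) (hfw : f w = y) :
    ((e (f w) ⟨w, hw, rfl⟩ : ↥{w' ∈ Y | k w' = f w}) : X)
      = ((e y ⟨w, hw, hfw⟩ : ↥{w' ∈ Y | k w' = y}) : X) := by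
  subst hfw; rfl

private lemma e_cast_symm {X : Type*} {Y : Set X} {f k : X → X}
    (e : ∀ y : X, ↥{w ∈ Y | f w = y} ≃ ↥{w ∈ Y | k w = y})
    {w y : X} (hw : w ∈ Y) (hkw : k w = y) :
    (((e (k w)).symm ⟨w, hw, rfl⟩ : ↥{w' ∈ Y | f w' = k w}) : X)
      = (((e y).symm ⟨w, hw, hkw⟩ : ↥{w' ∈ Y | f w' = y}) : X) := by
  subst hkw; rfl

private lemma stmt_15_fwd {X : Type*} (Y : Set X) (hY : Y.Nonempty)
    (f g : X → X) (hf : OmegaBar Y f) (hg : OmegaBar Y g) :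
    GreenD Y f g
      → Cardinal.mk ↥(Set.range f \ Y) = Cardinal.mk ↥(Set.range g \ Y) ∧
        ∃ α : Y ≃ Y, ∀ y : Y,
          Cardinal.mk ↥{w ∈ Y | f w = (y : X)}
            = Cardinal.mk ↥{w ∈ Y | g w = ((α y : Y) : X)} := by
  rintro ⟨k, hk, ⟨⟨h1, hh1, hfk⟩, ⟨h2, hh2, hkf⟩⟩, ⟨⟨h3, hh3, hkg⟩, ⟨h4, hh4, hgk⟩⟩⟩
  have hgY : ∀ {x : X}, x ∈ Y → g x ∈ Y := fun {x} hx => hg ▸ Set.mem_image_of_mem g hx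
  have hkY : ∀ {x : X}, x ∈ Y → k x ∈ Y := fun {x} hx => hk ▸ Set.mem_image_of_mem k hx
  have hh1Y : ∀ {x : X}, x ∈ Y → h1 x ∈ Y := fun {x} hx => hh1 ▸ Set.mem_image_of_mem h1 hx
  have hh2Y : ∀ {x : X}, x ∈ Y → h2 x ∈ Y := fun {x} hx => hh2 ▸ Set.mem_image_of_mem h2 hx
  have hker : ∀ x x' : X, k x = k x' ↔ g x = g x' := by
    intro x x'
    constructor
    · intro h; rw [hgk]; exact congrArg h4 h
    · intro h; rw [hkg]; exact congrArg h3 h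
  have hpre : ∀ x : X, k x ∈ Y ↔ g x ∈ Y := by
    intro x
    constructor
    · intro h
      rw [hgk]
      exact hh4 ▸ Set.mem_image_of_mem h4 h
    · intro h
      rw [hkg]
      exact hh3 ▸ Set.mem_image_of_mem h3 h
  have hrange : Set.range f = Set.range k := by
    apply Set.Subset.antisymm
    · rintro _ ⟨x, rfl⟩; rw [hfk]; exact ⟨h1 x, rfl⟩
    · rintro _ ⟨x, rfl⟩; rw [hkf]; exact ⟨h2 x, rfl⟩
  -- range difference cardinality
  have hsec : ∀ z : ↥(Set.range k \ Y), ∃ x : X, k x = z.1 := fun z => z.2.1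
  choose sec hsec using hsec
  have hcard1 : Cardinal.mk ↥(Set.range f \ Y) = Cardinal.mk ↥(Set.range g \ Y) := by
    rw [hrange]
    have hφmem : ∀ z : ↥(Set.range k \ Y), g (sec z) ∈ Set.range g \ Y := by
      intro z
      refine ⟨⟨sec z, rfl⟩, fun hmem => z.2.2 ?_⟩
      exact hsec z ▸ (hpre (sec z)).2 hmem
    refine Cardinal.mk_congr (Equiv.ofBijective
      (fun z => ⟨g (sec z), hφmem z⟩) ⟨?_, ?_⟩)
    · intro z z' h
      have h1' : g (sec z) = g (sec z') := congrArg Subtype.val h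
      have h2' := (hker _ _).2 h1'
      exact Subtype.ext (by rw [← hsec z, ← hsec z', h2'])
    · rintro ⟨w, hw⟩
      obtain ⟨u, hu⟩ := hw.1
      have hku : k u ∈ Set.range k \ Y := ⟨⟨u, rfl⟩, fun h => hw.2 (hu ▸ (hpre u).1 h)⟩
      refine ⟨⟨k u, hku⟩, Subtype.ext ?_⟩
      show g (sec ⟨k u, hku⟩) = w
      rw [← hu]
      exact (hker _ _).1 (hsec ⟨k u, hku⟩)
  -- the bijection α
  have hYk : ∀ y : Y, ∃ x, x ∈ Y ∧ k x = (y : X) := by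
    intro y
    have : (y : X) ∈ k '' Y := by rw [hk]; exact y.2
    exact this
  choose t ht1 ht2 using hYk
  have hα0inj : Function.Injective (fun y : Y => (⟨g (t y), hgY (ht1 y)⟩ : Y)) := by
    intro y y' h
    have h1' : g (t y) = g (t y') := congrArg Subtype.val h
    have h2' := (hker _ _).2 h1'
    exact Subtype.ext (by rw [← ht2 y, ← ht2 y', h2'])
  have hα0surj : Function.Surjective (fun y : Y => (⟨g (t y), hgY (ht1 y)⟩ : Y)) := by
    intro y'
    have : (y' : X) ∈ g '' Y := by rw [hg]; exact y'.2
    obtain ⟨u, hu, hgu⟩ := this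
    refine ⟨⟨k u, hkY hu⟩, Subtype.ext ?_⟩
    show g (t ⟨k u, hkY hu⟩) = (y' : X)
    rw [← hgu]
    exact (hker _ _).1 (ht2 ⟨k u, hkY hu⟩)
  refine ⟨hcard1, Equiv.ofBijective _ ⟨hα0inj, hα0surj⟩, ?_⟩
  intro y
  have step1 : Cardinal.mk ↥{w ∈ Y | f w = (y : X)} = Cardinal.mk ↥{w ∈ Y | k w = (y : X)} := by
    apply le_antisymm
    · -- surjection from k-fiber onto f-fiber via h2
      have hmem : ∀ w : ↥{w ∈ Y | k w = (y : X)}, h2 (w : X) ∈ {w ∈ Y | f w = (y : X)} := by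
        intro w
        have hmY : h2 (w : X) ∈ Y := hh2Y w.2.1
        refine ⟨hmY, ?_⟩
        have : f (h2 (w : X)) = k (w : X) := (congrFun hkf (w : X)).symm
        rw [this, w.2.2]
      apply Cardinal.mk_le_of_surjective (f := fun w => ⟨h2 (w : X), hmem w⟩)
      rintro ⟨v, hv1, hv2⟩
      have : v ∈ h2 '' Y := by rw [hh2]; exact hv1
      obtain ⟨w, hw, hww⟩ := this
      have hkw : k w = (y : X) := by
        have : k w = f (h2 w) := congrFun hkf w
        rw [this, hww, hv2]
      exact ⟨⟨w, hw, hkw⟩, Subtype.ext hww⟩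
    · -- surjection from f-fiber onto k-fiber via h1
      have hmem : ∀ w : ↥{w ∈ Y | f w = (y : X)}, h1 (w : X) ∈ {w ∈ Y | k w = (y : X)} := by
        intro w
        have hmY : h1 (w : X) ∈ Y := hh1Y w.2.1
        refine ⟨hmY, ?_⟩
        have : k (h1 (w : X)) = f (w : X) := (congrFun hfk (w : X)).symm
        rw [this, w.2.2]
      apply Cardinal.mk_le_of_surjective (f := fun w => ⟨h1 (w : X), hmem w⟩)
      rintro ⟨v, hv1, hv2⟩
      have : v ∈ h1 '' Y := by rw [hh1]; exact hv1
      obtain ⟨w, hw, hww⟩ := this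
      have hfw : f w = (y : X) := by
        have : f w = k (h1 w) := congrFun hfk w
        rw [this, hww, hv2]
      exact ⟨⟨w, hw, hfw⟩, Subtype.ext hww⟩
  have step2 : {w ∈ Y | k w = (y : X)} = {w ∈ Y | g w = g (t y)} := by
    ext w
    simp only [Set.mem_setOf_eq]
    constructor
    · rintro ⟨hw, hkw⟩
      exact ⟨hw, (hker _ _).1 (by rw [hkw, ht2 y])⟩
    · rintro ⟨hw, hgw⟩
      exact ⟨hw, by rw [(hker _ _).2 hgw, ht2 y]⟩
  have hcoe : (((Equiv.ofBijective _ ⟨hα0inj, hα0surj⟩) y : Y) : X) = g (t y) := rfl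
  rw [step1, hcoe, ← step2]

private lemma stmt_15_bwd {X : Type*} (Y : Set X) (hY : Y.Nonempty)
    (f g : X → X) (hf : OmegaBar Y f) (hg : OmegaBar Y g)
    (hcard : Cardinal.mk ↥(Set.range f \ Y) = Cardinal.mk ↥(Set.range g \ Y))
    (α : Y ≃ Y)
    (hα : ∀ y : Y, Cardinal.mk ↥{w ∈ Y | f w = (y : X)}
            = Cardinal.mk ↥{w ∈ Y | g w = ((α y : Y) : X)}) :
    GreenD Y f g := by
  classical
  obtain ⟨β⟩ := Cardinal.eq.1 hcard.symm
  have hgY : ∀ {x : X}, x ∈ Y → g x ∈ Y := fun {x} hx => hg ▸ Set.mem_image_of_mem g hx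
  have hfY : ∀ {x : X}, x ∈ Y → f x ∈ Y := fun {x} hx => hf ▸ Set.mem_image_of_mem f hx
  have hYf : Y ⊆ Set.range f := by
    intro y hy
    have : y ∈ f '' Y := by rw [hf]; exact hy
    obtain ⟨w, _, hw⟩ := this
    exact ⟨w, hw⟩
  -- the map θ on the "range side"
  obtain ⟨θ, hθY, hθN⟩ :
      ∃ θ : X → X, (∀ z (hz : z ∈ Y), θ z = ((α.symm ⟨z, hz⟩ : Y) : X)) ∧
        (∀ z (hz' : z ∈ Set.range g \ Y), θ z = ((β ⟨z, hz'⟩ : ↥(Set.range f \ Y)) : X)) :=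
    ⟨fun z => if hz : z ∈ Y then ((α.symm ⟨z, hz⟩ : Y) : X)
      else if hz' : z ∈ Set.range g \ Y then ((β ⟨z, hz'⟩ : ↥(Set.range f \ Y)) : X) else z,
     fun z hz => dif_pos hz,
     fun z hz' => by beta_reduce; rw [dif_neg hz'.2, dif_pos hz']⟩
  set k : X → X := θ ∘ g with hkdef
  have hkpos : ∀ (x : X) (hx : g x ∈ Y), k x = ((α.symm ⟨g x, hx⟩ : Y) : X) :=
    fun x hx => hθY (g x) hx
  have hkneg : ∀ (x : X) (hx : g x ∉ Y),
      k x = ((β ⟨g x, ⟨x, rfl⟩, hx⟩ : ↥(Set.range f \ Y)) : X) :=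
    fun x hx => hθN (g x) ⟨⟨x, rfl⟩, hx⟩
  have hkin : ∀ x : X, k x ∈ Y ↔ g x ∈ Y := by
    intro x
    by_cases hx : g x ∈ Y
    · rw [hkpos x hx]
      exact ⟨fun _ => hx, fun _ => (α.symm ⟨g x, hx⟩).2⟩
    · rw [hkneg x hx]
      exact ⟨fun h => absurd h (β ⟨g x, ⟨x, rfl⟩, hx⟩).2.2, fun h => absurd h hx⟩
  have hOk : OmegaBar Y k := by
    apply Set.Subset.antisymm
    · rintro _ ⟨w, hw, rfl⟩
      rw [hkpos w (hgY hw)]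
      exact (α.symm ⟨g w, hgY hw⟩).2
    · intro y hy
      have h1 : ((α ⟨y, hy⟩ : Y) : X) ∈ g '' Y := by rw [hg]; exact (α ⟨y, hy⟩).2
      obtain ⟨w, hw, hgw⟩ := h1
      refine ⟨w, hw, ?_⟩
      have hgwY : g w ∈ Y := by rw [hgw]; exact (α ⟨y, hy⟩).2
      rw [hkpos w hgwY]
      have h2 : (⟨g w, hgwY⟩ : Y) = α ⟨y, hy⟩ := Subtype.ext hgw
      rw [h2, Equiv.symm_apply_apply]
  have hker : ∀ x x' : X, k x = k x' ↔ g x = g x' := by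
    intro x x'
    constructor
    · intro h
      by_cases hx : g x ∈ Y
      · by_cases hx' : g x' ∈ Y
        · rw [hkpos x hx, hkpos x' hx'] at h
          have := α.symm.injective (Subtype.ext h)
          exact congrArg Subtype.val this
        · exact absurd ((hkin x').1 (h ▸ (hkin x).2 hx)) hx'
      · by_cases hx' : g x' ∈ Y
        · exact absurd ((hkin x).1 (h.symm ▸ (hkin x').2 hx')) hx
        · rw [hkneg x hx, hkneg x' hx'] at h
          have := β.injective (Subtype.ext h)
          exact congrArg Subtype.val this
    · intro h
      show θ (g x) = θ (g x')
      rw [h]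
  have hrange : Set.range k = Set.range f := by
    apply Set.Subset.antisymm
    · rintro _ ⟨x, rfl⟩
      by_cases hx : g x ∈ Y
      · rw [hkpos x hx]
        exact hYf (α.symm ⟨g x, hx⟩).2
      · rw [hkneg x hx]
        exact (β ⟨g x, ⟨x, rfl⟩, hx⟩).2.1
    · rintro _ ⟨x, rfl⟩
      by_cases hfx : f x ∈ Y
      · have : f x ∈ k '' Y := by rw [hOk]; exact hfx
        obtain ⟨w, _, hw⟩ := this
        exact ⟨w, hw⟩
      · have hmem : f x ∈ Set.range f \ Y := ⟨⟨x, rfl⟩, hfx⟩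
        obtain ⟨u, hu⟩ := (β.symm ⟨f x, hmem⟩).2.1
        have hun : g u ∉ Y := by rw [hu]; exact (β.symm ⟨f x, hmem⟩).2.2
        refine ⟨u, ?_⟩
        rw [hkneg u hun]
        have h2 : (⟨g u, ⟨⟨u, rfl⟩, hun⟩⟩ : ↥(Set.range g \ Y)) = β.symm ⟨f x, hmem⟩ :=
          Subtype.ext hu
        rw [h2, Equiv.apply_symm_apply]
  -- fibers of k agree with those of f in cardinality
  have hfib : ∀ y : X,
      Cardinal.mk ↥{w ∈ Y | f w = y} = Cardinal.mk ↥{w ∈ Y | k w = y} := by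
    intro y
    by_cases hy : y ∈ Y
    · have hset : {w ∈ Y | k w = y} = {w ∈ Y | g w = ((α ⟨y, hy⟩ : Y) : X)} := by
        ext w
        simp only [Set.mem_setOf_eq]
        constructor
        · rintro ⟨hw, hkw⟩
          refine ⟨hw, ?_⟩
          rw [hkpos w (hgY hw)] at hkw
          have h1 : α.symm ⟨g w, hgY hw⟩ = ⟨y, hy⟩ := Subtype.ext hkw
          have h2 := congrArg α h1
          rw [Equiv.apply_symm_apply] at h2
          exact congrArg Subtype.val h2
        · rintro ⟨hw, hgw⟩
          refine ⟨hw, ?_⟩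
          rw [hkpos w (hgY hw)]
          have h1 : (⟨g w, hgY hw⟩ : Y) = α ⟨y, hy⟩ := Subtype.ext hgw
          rw [h1, Equiv.symm_apply_apply]
      rw [hset]
      exact hα ⟨y, hy⟩
    · have h1 : {w ∈ Y | f w = y} = ∅ := by
        apply Set.eq_empty_iff_forall_notMem.2
        rintro w ⟨hw, hfw⟩
        exact hy (hfw ▸ hfY hw)
      have h2 : {w ∈ Y | k w = y} = ∅ := by
        apply Set.eq_empty_iff_forall_notMem.2
        rintro w ⟨hw, hkw⟩
        exact hy (hkw ▸ (hkin w).2 (hgY hw))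
      rw [h1, h2]
  have e : ∀ y : X, ↥{w ∈ Y | f w = y} ≃ ↥{w ∈ Y | k w = y} :=
    fun y => Classical.choice (Cardinal.eq.1 (hfib y))
  -- construct h1 with f = k ∘ h1
  have hsec1 : ∀ x : X, ∃ z, k z = f x := by
    intro x
    have : f x ∈ Set.range k := by rw [hrange]; exact ⟨x, rfl⟩
    exact this
  obtain ⟨hh1, hh1pos, hh1neg⟩ :
      ∃ h1 : X → X, (∀ x (hx : x ∈ Y), h1 x = ((e (f x) ⟨x, hx, rfl⟩ :
          ↥{w ∈ Y | k w = f x}) : X)) ∧ (∀ x, x ∉ Y → k (h1 x) = f x) :=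
    ⟨fun x => if hx : x ∈ Y then ((e (f x) ⟨x, hx, rfl⟩ : ↥{w ∈ Y | k w = f x}) : X)
      else Classical.choose (hsec1 x),
     fun x hx => dif_pos hx,
     fun x hx => by beta_reduce; rw [dif_neg hx]; exact Classical.choose_spec (hsec1 x)⟩
  have hGL1 : f = k ∘ hh1 := by
    funext x
    by_cases hx : x ∈ Y
    · show f x = k (hh1 x)
      rw [hh1pos x hx]
      exact ((e (f x) ⟨x, hx, rfl⟩).2.2).symm
    · exact (hh1neg x hx).symm
  have hOh1 : OmegaBar Y hh1 := by
    apply Set.Subset.antisymm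
    · rintro _ ⟨w, hw, rfl⟩
      rw [hh1pos w hw]
      exact (e (f w) ⟨w, hw, rfl⟩).2.1
    · intro v hv
      have hkv : k v ∈ Y := (hkin v).2 (hgY hv)
      set p := (e (k v)).symm ⟨v, hv, rfl⟩ with hp
      refine ⟨p.1, p.2.1, ?_⟩
      rw [hh1pos p.1 p.2.1]
      rw [e_cast e p.2.1 p.2.2]
      have h2 : (⟨p.1, p.2.1, p.2.2⟩ : ↥{w ∈ Y | f w = k v}) = p := Subtype.ext rfl
      rw [h2, hp, Equiv.apply_symm_apply]
  -- construct h2 with k = f ∘ h2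
  have hsec2 : ∀ x : X, ∃ z, f z = k x := by
    intro x
    have : k x ∈ Set.range f := by rw [← hrange]; exact ⟨x, rfl⟩
    exact this
  obtain ⟨hh2, hh2pos, hh2neg⟩ :
      ∃ h2 : X → X, (∀ x (hx : x ∈ Y), h2 x = (((e (k x)).symm ⟨x, hx, rfl⟩ :
          ↥{w ∈ Y | f w = k x}) : X)) ∧ (∀ x, x ∉ Y → f (h2 x) = k x) :=
    ⟨fun x => if hx : x ∈ Y then (((e (k x)).symm ⟨x, hx, rfl⟩ : ↥{w ∈ Y | f w = k x}) : X)
      else Classical.choose (hsec2 x),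
     fun x hx => dif_pos hx,
     fun x hx => by beta_reduce; rw [dif_neg hx]; exact Classical.choose_spec (hsec2 x)⟩
  have hGL2 : k = f ∘ hh2 := by
    funext x
    by_cases hx : x ∈ Y
    · show k x = f (hh2 x)
      rw [hh2pos x hx]
      exact (((e (k x)).symm ⟨x, hx, rfl⟩).2.2).symm
    · exact (hh2neg x hx).symm
  have hOh2 : OmegaBar Y hh2 := by
    apply Set.Subset.antisymm
    · rintro _ ⟨w, hw, rfl⟩
      rw [hh2pos w hw]
      exact ((e (k w)).symm ⟨w, hw, rfl⟩).2.1
    · intro v hv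
      have hfv : f v ∈ Y := hfY hv
      set q := e (f v) ⟨v, hv, rfl⟩ with hq
      refine ⟨q.1, q.2.1, ?_⟩
      rw [hh2pos q.1 q.2.1]
      rw [e_cast_symm e q.2.1 q.2.2]
      have h2 : (⟨q.1, q.2.1, q.2.2⟩ : ↥{w ∈ Y | k w = f v}) = q := Subtype.ext rfl
      rw [h2, hq, Equiv.symm_apply_apply]
  -- OmegaBar θ
  have hOθ : OmegaBar Y θ := by
    apply Set.Subset.antisymm
    · rintro _ ⟨z, hz, rfl⟩
      rw [hθY z hz]
      exact (α.symm ⟨z, hz⟩).2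
    · intro y hy
      refine ⟨(α ⟨y, hy⟩ : Y), (α ⟨y, hy⟩).2, ?_⟩
      rw [hθY _ (α ⟨y, hy⟩).2]
      have h2 : (⟨((α ⟨y, hy⟩ : Y) : X), (α ⟨y, hy⟩).2⟩ : Y) = α ⟨y, hy⟩ := Subtype.ext rfl
      rw [h2, Equiv.symm_apply_apply]
  -- construct ψ with g = ψ ∘ k
  obtain ⟨ψ, hψY, hψN⟩ :
      ∃ ψ : X → X, (∀ z (hz : z ∈ Y), ψ z = ((α ⟨z, hz⟩ : Y) : X)) ∧
        (∀ z (hz' : z ∈ Set.range f \ Y), ψ z = ((β.symm ⟨z, hz'⟩ : ↥(Set.range g \ Y)) : X)) :=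
    ⟨fun z => if hz : z ∈ Y then ((α ⟨z, hz⟩ : Y) : X)
      else if hz' : z ∈ Set.range f \ Y then ((β.symm ⟨z, hz'⟩ : ↥(Set.range g \ Y)) : X) else z,
     fun z hz => dif_pos hz,
     fun z hz' => by beta_reduce; rw [dif_neg hz'.2, dif_pos hz']⟩
  have hOψ : OmegaBar Y ψ := by
    apply Set.Subset.antisymm
    · rintro _ ⟨z, hz, rfl⟩
      rw [hψY z hz]
      exact (α ⟨z, hz⟩).2
    · intro y hy
      refine ⟨(α.symm ⟨y, hy⟩ : Y), (α.symm ⟨y, hy⟩).2, ?_⟩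
      rw [hψY _ (α.symm ⟨y, hy⟩).2]
      have h2 : (⟨((α.symm ⟨y, hy⟩ : Y) : X), (α.symm ⟨y, hy⟩).2⟩ : Y) = α.symm ⟨y, hy⟩ :=
        Subtype.ext rfl
      rw [h2, Equiv.apply_symm_apply]
  have hgψ : g = ψ ∘ k := by
    funext x
    show g x = ψ (k x)
    by_cases hx : g x ∈ Y
    · rw [hkpos x hx]
      rw [hψY _ (α.symm ⟨g x, hx⟩).2]
      have h2 : (⟨((α.symm ⟨g x, hx⟩ : Y) : X), (α.symm ⟨g x, hx⟩).2⟩ : Y) = α.symm ⟨g x, hx⟩ :=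
        Subtype.ext rfl
      rw [h2, Equiv.apply_symm_apply]
    · rw [hkneg x hx]
      rw [hψN _ (β ⟨g x, ⟨x, rfl⟩, hx⟩).2]
      have h2 : (⟨((β ⟨g x, ⟨x, rfl⟩, hx⟩ : ↥(Set.range f \ Y)) : X),
          (β ⟨g x, ⟨x, rfl⟩, hx⟩).2⟩ : ↥(Set.range f \ Y)) = β ⟨g x, ⟨x, rfl⟩, hx⟩ :=
        Subtype.ext rfl
      rw [h2, Equiv.symm_apply_apply]
  exact ⟨k, hOk, ⟨⟨hh1, hOh1, hGL1⟩, ⟨hh2, hOh2, hGL2⟩⟩, ⟨⟨θ, hOθ, hkdef⟩, ⟨ψ, hOψ, hgψ⟩⟩⟩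

theorem stmt_15 {X : Type*} (Y : Set X) (hY : Y.Nonempty)
    (f g : X → X) (hf : OmegaBar Y f) (hg : OmegaBar Y g) :
    GreenD Y f g
      ↔ Cardinal.mk ↥(Set.range f \ Y) = Cardinal.mk ↥(Set.range g \ Y) ∧
        ∃ α : Y ≃ Y, ∀ y : Y,
          Cardinal.mk ↥{w ∈ Y | f w = (y : X)}
            = Cardinal.mk ↥{w ∈ Y | g w = ((α y : Y) : X)} := by
  constructor
  · exact stmt_15_fwd Y hY f g hf hg
  · rintro ⟨hc, α, hα⟩
    exact stmt_15_bwd Y hY f g hf hg hc α hα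
end

section
/- Let f, g ∈ Ω̄(X,Y). Then f and g are J-related in Ω̄(X,Y) if and only if |f(X) \ Y| = |g(X) \ Y| and there exist partitions {P_y : y ∈ Y} and {Q_y : y ∈ Y} of Y (indexed by Y) such that for all y ∈ Y: |fiber of y under f|_Y| ≥ Σ_{w ∈ P_y} |fiber of w under g|_Y| and |fiber of y under g|_Y| ≥ Σ_{w ∈ Q_y} |fiber of w under f|_Y| (cardinal sums). -/
/-- Green's J-relation on the monoid Ω̄(X,Y) (composition left to right: f = hgh' means f = h' ∘ g ∘ h). -/
def GreenJ {X : Type*} (Y : Set X) (f g : X → X) : Prop :=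
  (∃ h h' : X → X, OmegaBar Y h ∧ OmegaBar Y h' ∧ f = h' ∘ g ∘ h) ∧
  (∃ k k' : X → X, OmegaBar Y k ∧ OmegaBar Y k' ∧ g = k' ∘ f ∘ k)

/-- A partition of Y indexed by Y: pairwise disjoint nonempty blocks whose union is Y. -/
def IsPartitionOf {X : Type*} (Y : Set X) (P : Y → Set X) : Prop :=
  (∀ y : Y, (P y).Nonempty) ∧ (∀ y : Y, P y ⊆ Y) ∧
  (∀ y y' : Y, y ≠ y' → Disjoint (P y) (P y')) ∧ (⋃ y : Y, P y) = Y


open Set Function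

universe u

lemma aux_exists_surj_of_le {α β : Type u} [Nonempty β]
    (h : Cardinal.mk β ≤ Cardinal.mk α) : ∃ S : α → β, Function.Surjective S := by
  obtain ⟨e⟩ := Cardinal.le_def _ _ |>.mp h
  exact ⟨Function.invFun e, fun b => ⟨e b, Function.leftInverse_invFun e.injective b⟩⟩

lemma aux_exists_surj_comp {α β γ : Type u} [Nonempty β] (φ : α → γ) (ψ : β → γ)
    (hψ : Function.Surjective ψ)
    (hcard : ∀ c, Cardinal.mk ↥(ψ ⁻¹' {c}) ≤ Cardinal.mk ↥(φ ⁻¹' {c})) :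
    ∃ S : α → β, Function.Surjective S ∧ ψ ∘ S = φ := by
  have hne : ∀ c, Nonempty ↥(ψ ⁻¹' {c}) := fun c => by
    obtain ⟨b, hb⟩ := hψ c; exact ⟨⟨b, hb⟩⟩
  have ht : ∀ c, ∃ t : ↥(φ ⁻¹' {c}) → ↥(ψ ⁻¹' {c}), Function.Surjective t := fun c =>
    aux_exists_surj_of_le (hcard c)
  choose t htsurj using ht
  classical
  set T : γ → α → β := fun c a => if h : φ a = c then ↑(t c ⟨a, h⟩) else Classical.arbitrary β
    with hT
  have hT1 : ∀ c a (h : φ a = c), ψ (T c a) = c := by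
    intro c a h
    simp only [hT, dif_pos h]
    exact (t c ⟨a, h⟩).2
  have hT2 : ∀ c b, ψ b = c → ∃ a, φ a = c ∧ T c a = b := by
    intro c b hb
    obtain ⟨a, ha⟩ := htsurj c ⟨b, hb⟩
    refine ⟨↑a, a.2, ?_⟩
    simp only [hT]
    rw [dif_pos (show φ ↑a = c from a.2)]
    exact congrArg Subtype.val ha
  refine ⟨fun a => T (φ a) a, ?_, ?_⟩
  · intro b
    obtain ⟨a, ha, hab⟩ := hT2 (ψ b) b rfl
    exact ⟨a, by show T (φ a) a = b; rw [ha]; exact hab⟩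
  · funext a
    exact hT1 (φ a) a rfl

lemma aux_factor {X : Type u} (Y : Set X) (hY : Y.Nonempty)
    (f g : X → X) (hf : OmegaBar Y f) (hg : OmegaBar Y g)
    (hle : Cardinal.mk ↥(Set.range f \ Y) ≤ Cardinal.mk ↥(Set.range g \ Y))
    (P : Y → Set X) (hP : IsPartitionOf Y P)
    (hsum : ∀ y : Y, Cardinal.sum (fun w : ↥(P y) => Cardinal.mk ↥{v ∈ Y | g v = (w : X)})
      ≤ Cardinal.mk ↥{v ∈ Y | f v = (y : X)}) :
    ∃ h h' : X → X, OmegaBar Y h ∧ OmegaBar Y h' ∧ f = h' ∘ g ∘ h := by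
  classical
  obtain ⟨hPne, hPsub, hPdis, hPun⟩ := hP
  have hneY : Nonempty ↥Y := hY.to_subtype
  have fmem : ∀ v ∈ Y, f v ∈ Y := fun v hv => hf ▸ Set.mem_image_of_mem f hv
  have gmem : ∀ v ∈ Y, g v ∈ Y := fun v hv => hg ▸ Set.mem_image_of_mem g hv
  have gsur : ∀ w ∈ Y, ∃ v ∈ Y, g v = w := by
    intro w hw
    rw [← hg] at hw; obtain ⟨v, hv, hvw⟩ := hw; exact ⟨v, hv, hvw⟩
  have existsP : ∀ z ∈ Y, ∃ y : Y, z ∈ P y := by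
    intro z hz
    rw [← hPun] at hz
    exact Set.mem_iUnion.mp hz
  have uniqueP : ∀ z (y y' : Y), z ∈ P y → z ∈ P y' → y = y' := by
    intro z y y' h1 h2
    by_contra hne
    exact (hPdis y y' hne).ne_of_mem h1 h2 rfl
  have existsPY : ∀ v : ↥Y, ∃ y : Y, g ↑v ∈ P y := fun v => existsP (g ↑v) (gmem ↑v v.2)
  choose ψ hψ using existsPY
  have hψeq : ∀ (v : ↥Y) (y : Y), g ↑v ∈ P y → ψ v = y := fun v y h => uniqueP _ _ _ (hψ v) h
  have ψsurj : Function.Surjective ψ := by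
    intro y
    obtain ⟨w, hw⟩ := hPne y
    obtain ⟨v, hv, hvw⟩ := gsur w (hPsub y hw)
    exact ⟨⟨v, hv⟩, hψeq ⟨v, hv⟩ y (by rwa [hvw])⟩
  have hcard : ∀ y : Y, Cardinal.mk ↥(ψ ⁻¹' {y})
      ≤ Cardinal.mk ↥((fun v : ↥Y => (⟨f ↑v, fmem ↑v v.2⟩ : ↥Y)) ⁻¹' {y}) := by
    intro y
    have memP : ∀ v : ↥(ψ ⁻¹' {y}), g ↑↑v ∈ P y := fun v => by
      have h := hψ ↑v
      rwa [show ψ ↑v = y from v.2] at h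
    have e1 : Cardinal.mk ↥(ψ ⁻¹' {y})
        ≤ Cardinal.mk (Σ w : ↥(P y), ↥{v ∈ Y | g v = (w : X)}) := by
      refine Cardinal.mk_le_of_injective (f := fun v =>
        (⟨⟨g ↑↑v, memP v⟩, ⟨↑↑v, ⟨(v : ↥Y).2, rfl⟩⟩⟩ :
          Σ w : ↥(P y), ↥{v ∈ Y | g v = (w : X)})) ?_
      intro v v' hvv'
      have hx : (↑↑v : X) = ↑↑v' :=
        congrArg (fun p : (Σ w : ↥(P y), ↥{v ∈ Y | g v = (w : X)}) => (↑p.2 : X)) hvv'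
      exact Subtype.ext (Subtype.ext hx)
    calc Cardinal.mk ↥(ψ ⁻¹' {y})
        ≤ Cardinal.mk (Σ w : ↥(P y), ↥{v ∈ Y | g v = (w : X)}) := e1
      _ = Cardinal.sum (fun w : ↥(P y) => Cardinal.mk ↥{v ∈ Y | g v = (w : X)}) :=
          Cardinal.mk_sigma _
      _ ≤ Cardinal.mk ↥{v ∈ Y | f v = (y : X)} := hsum y
      _ ≤ Cardinal.mk ↥((fun v : ↥Y => (⟨f ↑v, fmem ↑v v.2⟩ : ↥Y)) ⁻¹' {y}) := by
          refine Cardinal.mk_le_of_injective (f := fun v =>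
            (⟨⟨↑v, v.2.1⟩, Subtype.ext v.2.2⟩ :
              ↥((fun v : ↥Y => (⟨f ↑v, fmem ↑v v.2⟩ : ↥Y)) ⁻¹' {y}))) ?_
          intro v v' h
          exact Subtype.ext (congrArg
            (fun p : ↥((fun v : ↥Y => (⟨f ↑v, fmem ↑v v.2⟩ : ↥Y)) ⁻¹' {y}) => (↑↑p : X)) h)
  obtain ⟨S, hSsurj, hScomp⟩ :=
    aux_exists_surj_comp (fun v : ↥Y => (⟨f ↑v, fmem ↑v v.2⟩ : ↥Y)) ψ ψsurj hcard
  obtain ⟨σ⟩ := Cardinal.le_def _ _ |>.mp hle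
  have hv2 : ∀ z : ↥(Set.range g \ Y), ∃ v, g v = ↑z := fun z => z.2.1
  set h : X → X := fun x =>
    if hx : x ∈ Y then ↑(S ⟨x, hx⟩)
    else if hfx : f x ∈ Y then ↑(Classical.choose (ψsurj ⟨f x, hfx⟩))
    else Classical.choose (hv2 (σ ⟨f x, ⟨Set.mem_range_self x, hfx⟩⟩)) with hhdef
  set h' : X → X := fun z =>
    if hz : z ∈ Y then ↑(Classical.choose (existsP z hz))
    else if hz' : ∃ u : ↥(Set.range f \ Y), ↑(σ u) = z then ↑↑(Classical.choose hz')
    else Classical.choose hY with hh'def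
  have hh'P : ∀ z (y : Y), z ∈ Y → z ∈ P y → h' z = ↑y := by
    intro z y hz hzy
    simp only [hh'def]
    rw [dif_pos hz]
    exact congrArg _ (uniqueP z _ y (Classical.choose_spec (existsP z hz)) hzy)
  have hh'O : OmegaBar Y h' := by
    apply Set.Subset.antisymm
    · rintro z ⟨w, hw, rfl⟩
      obtain ⟨y, hy⟩ := existsP w hw
      rw [hh'P w y hw hy]
      exact y.2
    · intro z hz
      obtain ⟨w, hw⟩ := hPne ⟨z, hz⟩
      exact ⟨w, hPsub _ hw, hh'P w ⟨z, hz⟩ (hPsub _ hw) hw⟩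
  have hhx : ∀ x (hx : x ∈ Y), h x = ↑(S ⟨x, hx⟩) := fun x hx => by
    simp only [hhdef]; rw [dif_pos hx]
  have hhO : OmegaBar Y h := by
    apply Set.Subset.antisymm
    · rintro z ⟨x, hx, rfl⟩
      rw [hhx x hx]; exact (S ⟨x, hx⟩).2
    · intro z hz
      obtain ⟨u, hu⟩ := hSsurj ⟨z, hz⟩
      refine ⟨↑u, u.2, ?_⟩
      rw [hhx ↑u u.2, Subtype.coe_eta, hu]
  refine ⟨h, h', hhO, hh'O, ?_⟩
  funext x
  show f x = h' (g (h x))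
  by_cases hx : x ∈ Y
  · rw [hhx x hx]
    have h1 : ψ (S ⟨x, hx⟩) = ⟨f x, fmem x hx⟩ := congrFun hScomp ⟨x, hx⟩
    have h2 : g ↑(S ⟨x, hx⟩) ∈ P ⟨f x, fmem x hx⟩ := h1 ▸ hψ (S ⟨x, hx⟩)
    rw [hh'P (g ↑(S ⟨x, hx⟩)) ⟨f x, fmem x hx⟩ (gmem _ (S ⟨x, hx⟩).2) h2]
  · by_cases hfx : f x ∈ Y
    · have hstep : h x = ↑(Classical.choose (ψsurj ⟨f x, hfx⟩)) := by
        simp only [hhdef]; rw [dif_neg hx, dif_pos hfx]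
      have hspec : ψ (Classical.choose (ψsurj ⟨f x, hfx⟩)) = ⟨f x, hfx⟩ :=
        Classical.choose_spec (ψsurj ⟨f x, hfx⟩)
      have h2 : g ↑(Classical.choose (ψsurj ⟨f x, hfx⟩)) ∈ P ⟨f x, hfx⟩ := by
        have h2' := hψ (Classical.choose (ψsurj ⟨f x, hfx⟩))
        rwa [hspec] at h2'
      rw [hstep, hh'P _ ⟨f x, hfx⟩ (gmem _ (Classical.choose (ψsurj ⟨f x, hfx⟩)).2) h2]
    · have hstep : h x = Classical.choose (hv2 (σ ⟨f x, ⟨Set.mem_range_self x, hfx⟩⟩)) := by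
        simp only [hhdef]; rw [dif_neg hx, dif_neg hfx]
      have hgh : g (h x) = ↑(σ ⟨f x, ⟨Set.mem_range_self x, hfx⟩⟩) := by
        rw [hstep]; exact Classical.choose_spec (hv2 (σ ⟨f x, ⟨Set.mem_range_self x, hfx⟩⟩))
      have hnY : g (h x) ∉ Y := by rw [hgh]; exact (σ ⟨f x, ⟨Set.mem_range_self x, hfx⟩⟩).2.2
      have hex : ∃ u' : ↥(Set.range f \ Y), ↑(σ u') = g (h x) :=
        ⟨⟨f x, ⟨Set.mem_range_self x, hfx⟩⟩, hgh.symm⟩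
      have hval : h' (g (h x)) = ↑↑(Classical.choose hex) := by
        simp only [hh'def]; rw [dif_neg hnY, dif_pos hex]
      have hchoose : Classical.choose hex = ⟨f x, ⟨Set.mem_range_self x, hfx⟩⟩ := by
        apply σ.injective
        apply Subtype.ext
        rw [Classical.choose_spec hex, hgh]
      rw [hval, hchoose]

lemma aux_range_le {X : Type u} (Y : Set X) (f g h h' : X → X)
    (hh' : OmegaBar Y h') (hfac : f = h' ∘ g ∘ h) :
    Cardinal.mk ↥(Set.range f \ Y) ≤ Cardinal.mk ↥(Set.range g \ Y) := by
  classical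
  have key : ∀ t : ↥(Set.range f \ Y), ∃ z : ↥(Set.range g \ Y), h' ↑z = ↑t := by
    rintro ⟨t, ⟨x, rfl⟩, htY⟩
    have hzr : g (h x) ∈ Set.range g := Set.mem_range_self _
    have hzY : g (h x) ∉ Y := by
      intro hmem
      apply htY
      have hmem2 : h' (g (h x)) ∈ h' '' Y := Set.mem_image_of_mem h' hmem
      rw [hh'] at hmem2
      rw [hfac]
      exact hmem2
    exact ⟨⟨g (h x), hzr, hzY⟩, (congrFun hfac x).symm⟩
  choose z hz using key
  refine Cardinal.mk_le_of_injective (f := z) ?_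
  intro t t' htt'
  apply Subtype.ext
  rw [← hz t, ← hz t', htt']

lemma aux_partition {X : Type u} (Y : Set X) (f g h h' : X → X)
    (hh : OmegaBar Y h) (hh' : OmegaBar Y h') (hfac : f = h' ∘ g ∘ h) :
    ∃ P : Y → Set X, IsPartitionOf Y P ∧ ∀ y : Y,
      Cardinal.sum (fun w : ↥(P y) => Cardinal.mk ↥{v ∈ Y | g v = (w : X)})
        ≤ Cardinal.mk ↥{v ∈ Y | f v = (y : X)} := by
  classical
  have h'mem : ∀ w ∈ Y, h' w ∈ Y := fun w hw => hh' ▸ Set.mem_image_of_mem h' hw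
  refine ⟨fun y => {w ∈ Y | h' w = ↑y}, ⟨?_, ?_, ?_, ?_⟩, ?_⟩
  · intro y
    have hmem : (y : X) ∈ h' '' Y := by rw [hh']; exact y.2
    obtain ⟨w, hw, hwy⟩ := hmem
    exact ⟨w, hw, hwy⟩
  · intro y w hw; exact hw.1
  · intro y y' hne
    rw [Set.disjoint_left]
    intro w hw hw'
    exact hne (Subtype.ext (hw.2.symm.trans hw'.2))
  · apply Set.Subset.antisymm
    · exact Set.iUnion_subset fun y w hw => hw.1
    · intro w hw
      exact Set.mem_iUnion.mpr ⟨⟨h' w, h'mem w hw⟩, hw, rfl⟩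
  · intro y
    rw [← Cardinal.mk_sigma]
    have hsec : ∀ v ∈ Y, ∃ u, u ∈ Y ∧ h u = v := by
      intro v hv; rw [← hh] at hv; obtain ⟨u, hu, huv⟩ := hv; exact ⟨u, hu, huv⟩
    choose s hsY hsh using fun (v : ↥Y) => hsec ↑v v.2
    have hmap : ∀ p : (Σ w : ↥{w ∈ Y | h' w = (y : X)}, ↥{v ∈ Y | g v = ((w : X))}),
        s ⟨↑p.2, p.2.2.1⟩ ∈ Y ∧ f (s ⟨↑p.2, p.2.2.1⟩) = ↑y := by
      intro p
      refine ⟨hsY _, ?_⟩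
      rw [hfac]
      show h' (g (h (s ⟨↑p.2, p.2.2.1⟩))) = ↑y
      rw [hsh ⟨↑p.2, p.2.2.1⟩]
      rw [show g (↑p.2 : X) = ↑p.1 from p.2.2.2]
      exact p.1.2.2
    refine Cardinal.mk_le_of_injective
      (f := fun p => ⟨s ⟨↑p.2, p.2.2.1⟩, hmap p⟩) ?_
    intro p q hpq
    have hs : s ⟨↑p.2, p.2.2.1⟩ = s ⟨↑q.2, q.2.2.1⟩ := congrArg Subtype.val hpq
    have h1 : (↑p.2 : X) = h (s ⟨↑p.2, p.2.2.1⟩) := (hsh ⟨↑p.2, p.2.2.1⟩).symm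
    have h2 : (↑q.2 : X) = h (s ⟨↑q.2, q.2.2.1⟩) := (hsh ⟨↑q.2, q.2.2.1⟩).symm
    have hv : (↑p.2 : X) = ↑q.2 := by rw [h1, hs]; exact h2.symm
    have hw : (↑p.1 : X) = ↑q.1 := by rw [← p.2.2.2, ← q.2.2.2, hv]
    obtain ⟨w, u⟩ := p
    obtain ⟨w', u'⟩ := q
    obtain rfl : w = w' := Subtype.ext hw
    exact congrArg (Sigma.mk w) (Subtype.ext hv)

theorem stmt_16 {X : Type*} (Y : Set X) (hY : Y.Nonempty)
    (f g : X → X) (hf : OmegaBar Y f) (hg : OmegaBar Y g) :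
    GreenJ Y f g
      ↔ Cardinal.mk ↥(Set.range f \ Y) = Cardinal.mk ↥(Set.range g \ Y) ∧
        (∃ P : Y → Set X, IsPartitionOf Y P ∧ ∀ y : Y,
          Cardinal.sum (fun w : ↥(P y) => Cardinal.mk ↥{v ∈ Y | g v = (w : X)})
            ≤ Cardinal.mk ↥{v ∈ Y | f v = (y : X)}) ∧
        (∃ Q : Y → Set X, IsPartitionOf Y Q ∧ ∀ y : Y,
          Cardinal.sum (fun w : ↥(Q y) => Cardinal.mk ↥{v ∈ Y | f v = (w : X)})
            ≤ Cardinal.mk ↥{v ∈ Y | g v = (y : X)}) := by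
  constructor
  · rintro ⟨⟨h, h', hh, hh', hfac⟩, ⟨k, k', hk, hk', hgac⟩⟩
    exact ⟨le_antisymm (aux_range_le Y f g h h' hh' hfac) (aux_range_le Y g f k k' hk' hgac),
      aux_partition Y f g h h' hh hh' hfac, aux_partition Y g f k k' hk hk' hgac⟩
  · rintro ⟨hcard, ⟨P, hP, hPsum⟩, ⟨Q, hQ, hQsum⟩⟩
    exact ⟨aux_factor Y hY f g hf hg hcard.le P hP hPsum,
           aux_factor Y hY g f hg hf hcard.ge Q hQ hQsum⟩
end

section
/- Let X be a nonempty set and Y ⊆ X nonempty. Green's relations D and J coincide on Ω̄(X,Y) = {f : X → X : f(Y) = Y} if and only if Y is finite. -/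
open Set Function

section Aux

variable {X : Type*} {Y : Set X}

lemma omegaBar_id : OmegaBar Y (id : X → X) := Set.image_id Y

lemma greenD_to_greenJ {f g : X → X} (hD : GreenD Y f g) : GreenJ Y f g := by
  obtain ⟨k, _, ⟨⟨h₁, hh₁, hf⟩, ⟨h₃, hh₃, hk1⟩⟩, ⟨⟨h₂, hh₂, hk2⟩, ⟨h₄, hh₄, hgg⟩⟩⟩ := hD
  exact ⟨⟨h₁, h₂, hh₁, hh₂, by rw [hf, hk2]; rfl⟩,
         ⟨h₃, h₄, hh₃, hh₄, by rw [hgg, hk1]⟩⟩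

lemma omegaBar_equiv (hY : Y.Finite) {f : X → X} (hf : OmegaBar Y f) :
    ∃ F : Y ≃ Y, ∀ y : Y, (F y : X) = f y := by
  have hmap : ∀ y : Y, f (y : X) ∈ Y := fun y => by
    have : f (y : X) ∈ f '' Y := ⟨y, y.2, rfl⟩
    rwa [hf] at this
  let F0 : Y → Y := fun y => ⟨f y, hmap y⟩
  have hsurj : Surjective F0 := by
    intro z
    have hz : (z : X) ∈ f '' Y := by rw [hf]; exact z.2
    obtain ⟨y, hy, hyz⟩ := hz
    exact ⟨⟨y, hy⟩, Subtype.ext hyz⟩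
  have : Finite Y := hY
  exact ⟨Equiv.ofBijective F0 ⟨Finite.injective_iff_surjective.mpr hsurj, hsurj⟩,
    fun y => rfl⟩

lemma L_factor (hY : Y.Finite) {f k : X → X} (hf : OmegaBar Y f) (hk : OmegaBar Y k)
    (hr : Set.range f ⊆ Set.range k) :
    ∃ h : X → X, OmegaBar Y h ∧ f = k ∘ h := by
  classical
  obtain ⟨F, hF⟩ := omegaBar_equiv hY hf
  obtain ⟨K, hK⟩ := omegaBar_equiv hY hk
  let h : X → X := fun x => if hx : x ∈ Y then (K.symm (F ⟨x, hx⟩) : X)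
      else (Set.mem_range.mp (hr (Set.mem_range_self x))).choose
  have hpos : ∀ (x : X) (hx : x ∈ Y), h x = ((K.symm (F ⟨x, hx⟩)) : X) :=
    fun x hx => dif_pos hx
  have hneg : ∀ (x : X), x ∉ Y → k (h x) = f x := by
    intro x hx
    have e : h x = (Set.mem_range.mp (hr (Set.mem_range_self x))).choose := dif_neg hx
    rw [e]
    exact (Set.mem_range.mp (hr (Set.mem_range_self x))).choose_spec
  refine ⟨h, ?_, ?_⟩
  · apply Set.Subset.antisymm
    · rintro _ ⟨x, hx, rfl⟩
      rw [hpos x hx]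
      exact (K.symm (F ⟨x, hx⟩)).2
    · intro z hz
      refine ⟨(F.symm (K ⟨z, hz⟩) : X), (F.symm (K ⟨z, hz⟩)).2, ?_⟩
      rw [hpos _ (F.symm (K ⟨z, hz⟩)).2, Subtype.coe_eta, Equiv.apply_symm_apply,
        Equiv.symm_apply_apply]
  · funext x
    by_cases hx : x ∈ Y
    · show f x = k (h x)
      rw [hpos x hx, ← hK (K.symm (F ⟨x, hx⟩)), Equiv.apply_symm_apply]
      exact (hF ⟨x, hx⟩).symm
    · exact (hneg x hx).symm

lemma J_to_D (hY : Y.Finite) {f g : X → X} (hf : OmegaBar Y f) (hg : OmegaBar Y g)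
    (hJ : GreenJ Y f g) : GreenD Y f g := by
  classical
  obtain ⟨⟨h1, h2, hh1, hh2, hfac⟩, ⟨u1, u2, hu1, hu2, hgac⟩⟩ := hJ
  have hfx : ∀ x, f x = h2 (g (h1 x)) := fun x => congrFun hfac x
  have hgx : ∀ x, g x = u2 (f (u1 x)) := fun x => congrFun hgac x
  have hYf : Y ⊆ Set.range f := by
    intro y hy
    rw [← hf] at hy
    obtain ⟨x, _, hx⟩ := hy
    exact ⟨x, hx⟩
  have hYg : Y ⊆ Set.range g := by
    intro y hy
    rw [← hg] at hy
    obtain ⟨x, _, hx⟩ := hy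
    exact ⟨x, hx⟩
  -- cardinal equality of ranges
  have card1 : Cardinal.mk (Set.range f) ≤ Cardinal.mk (Set.range g) := by
    refine Cardinal.mk_le_of_injective
      (f := fun z : Set.range f => (⟨g (h1 (Set.mem_range.mp z.2).choose),
        Set.mem_range_self _⟩ : Set.range g)) ?_
    intro z₁ z₂ hz
    have e1 := (Set.mem_range.mp z₁.2).choose_spec
    have e2 := (Set.mem_range.mp z₂.2).choose_spec
    apply Subtype.ext
    rw [← e1, ← e2, hfx, hfx]
    exact congrArg h2 (congrArg Subtype.val hz)
  have card2 : Cardinal.mk (Set.range g) ≤ Cardinal.mk (Set.range f) := by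
    refine Cardinal.mk_le_of_injective
      (f := fun z : Set.range g => (⟨f (u1 (Set.mem_range.mp z.2).choose),
        Set.mem_range_self _⟩ : Set.range f)) ?_
    intro z₁ z₂ hz
    have e1 := (Set.mem_range.mp z₁.2).choose_spec
    have e2 := (Set.mem_range.mp z₂.2).choose_spec
    apply Subtype.ext
    rw [← e1, ← e2, hgx, hgx]
    exact congrArg u2 (congrArg Subtype.val hz)
  have hcard : Cardinal.mk (Set.range f) = Cardinal.mk (Set.range g) :=
    le_antisymm card1 card2
  have hdiff : Cardinal.mk ↥(Set.range g \ Y) = Cardinal.mk ↥(Set.range f \ Y) := by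
    have d1 := Cardinal.mk_diff_add_mk hYf
    have d2 := Cardinal.mk_diff_add_mk hYg
    have hsum : Cardinal.mk ↥(Set.range g \ Y) + Cardinal.mk Y
        = Cardinal.mk ↥(Set.range f \ Y) + Cardinal.mk Y := by
      rw [d1, d2, hcard]
    have : Finite Y := hY
    exact Cardinal.eq_of_add_eq_add_right hsum (Cardinal.lt_aleph0_of_finite _)
  obtain ⟨β⟩ := Cardinal.eq.mp hdiff
  -- the middle element k
  set bt : X → X := fun z => if hz : z ∈ Set.range g \ Y then (β ⟨z, hz⟩ : X) else z
    with hbt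
  have hbt1 : ∀ z (hz : z ∈ Set.range g \ Y), bt z = (β ⟨z, hz⟩ : X) :=
    fun z hz => dif_pos hz
  have hbt2 : ∀ z, z ∉ Set.range g \ Y → bt z = z := fun z hz => dif_neg hz
  have hbtY : ∀ y ∈ Y, bt y = y := fun y hy => hbt2 y (fun hz => hz.2 hy)
  have hΩbt : OmegaBar Y bt := by
    apply Set.Subset.antisymm
    · rintro _ ⟨y, hy, rfl⟩
      rw [hbtY y hy]; exact hy
    · intro y hy
      exact ⟨y, hy, hbtY y hy⟩
  set k : X → X := bt ∘ g with hkdef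
  have hΩk : OmegaBar Y k := by
    show (bt ∘ g) '' Y = Y
    rw [Set.image_comp, hg]
    exact hΩbt
  have dich : ∀ x, g x ∈ Set.range g \ Y ∨ g x ∈ Y := by
    intro x
    by_cases hx : g x ∈ Y
    · exact Or.inr hx
    · exact Or.inl ⟨Set.mem_range_self x, hx⟩
  have hker : ∀ x x', k x = k x' ↔ g x = g x' := by
    intro x x'
    constructor
    · intro e
      have e' : bt (g x) = bt (g x') := e
      rcases dich x with hd | hd <;> rcases dich x' with hd' | hd'
      · rw [hbt1 _ hd, hbt1 _ hd'] at e'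
        exact congrArg Subtype.val (β.injective (Subtype.coe_injective e'))
      · exfalso
        rw [hbt1 _ hd, hbt2 _ (fun hz => hz.2 hd')] at e'
        exact (β ⟨g x, hd⟩).2.2 (e' ▸ hd')
      · exfalso
        rw [hbt2 _ (fun hz => hz.2 hd), hbt1 _ hd'] at e'
        exact (β ⟨g x', hd'⟩).2.2 (e'.symm ▸ hd)
      · rwa [hbt2 _ (fun hz => hz.2 hd), hbt2 _ (fun hz => hz.2 hd')] at e'
    · intro e
      show bt (g x) = bt (g x')
      rw [e]
  have hrange : Set.range k = Set.range f := by
    apply Set.Subset.antisymm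
    · rintro _ ⟨x, rfl⟩
      show bt (g x) ∈ Set.range f
      rcases dich x with hd | hd
      · rw [hbt1 _ hd]
        exact (β ⟨g x, hd⟩).2.1
      · rw [hbt2 _ (fun hz => hz.2 hd)]
        exact hYf hd
    · rintro _ ⟨x, rfl⟩
      by_cases hfx : f x ∈ Y
      · have hfx' : f x ∈ g '' Y := by rw [hg]; exact hfx
        obtain ⟨y, _, hyx⟩ := hfx'
        refine ⟨y, ?_⟩
        show bt (g y) = f x
        rw [hyx, hbtY _ hfx]
      · have hm : f x ∈ Set.range f \ Y := ⟨Set.mem_range_self x, hfx⟩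
        obtain ⟨y, hy⟩ := (β.symm ⟨f x, hm⟩).2.1
        refine ⟨y, ?_⟩
        show bt (g y) = f x
        rw [hy, hbt1 _ (β.symm ⟨f x, hm⟩).2]
        have : (⟨((β.symm ⟨f x, hm⟩) : X), (β.symm ⟨f x, hm⟩).2⟩ : ↥(Set.range g \ Y))
            = β.symm ⟨f x, hm⟩ := Subtype.coe_eta _ _
        rw [this, Equiv.apply_symm_apply]
  refine ⟨k, hΩk, ⟨?_, ?_⟩, ⟨?_, ?_⟩⟩
  · exact L_factor hY hf hΩk (hrange ▸ Set.Subset.rfl)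
  · exact L_factor hY hΩk hf (hrange ▸ Set.Subset.rfl)
  · exact ⟨bt, hΩbt, rfl⟩
  · -- g = w ∘ k
    set w : X → X := fun z => if hz : z ∈ Set.range f \ Y then (β.symm ⟨z, hz⟩ : X) else z
      with hw
    have hw1 : ∀ z (hz : z ∈ Set.range f \ Y), w z = (β.symm ⟨z, hz⟩ : X) :=
      fun z hz => dif_pos hz
    have hw2 : ∀ z, z ∉ Set.range f \ Y → w z = z := fun z hz => dif_neg hz
    have hwY : ∀ y ∈ Y, w y = y := fun y hy => hw2 y (fun hz => hz.2 hy)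
    have hΩw : OmegaBar Y w := by
      apply Set.Subset.antisymm
      · rintro _ ⟨y, hy, rfl⟩
        rw [hwY y hy]; exact hy
      · intro y hy
        exact ⟨y, hy, hwY y hy⟩
    refine ⟨w, hΩw, ?_⟩
    funext x
    show g x = w (bt (g x))
    rcases dich x with hd | hd
    · rw [hbt1 _ hd, hw1 _ (β ⟨g x, hd⟩).2]
      have : (⟨((β ⟨g x, hd⟩) : X), (β ⟨g x, hd⟩).2⟩ : ↥(Set.range f \ Y))
          = β ⟨g x, hd⟩ := Subtype.coe_eta _ _
      rw [this, Equiv.symm_apply_apply]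
    · rw [hbt2 _ (fun hz => hz.2 hd), hw2 _ (fun hz => hz.2 hd)]

/-! ### The infinite case -/

def nf0 : ℕ → ℕ := fun n => if n % 2 = 0 then 0 else n / 2 + 1

def ng0 : ℕ → ℕ := fun n => if n % 4 = 0 then 0 else if n % 4 = 2 then 1 else n / 2 + 2

def nh0 : ℕ → ℕ := fun n => if n ≤ 1 then 0 else n - 1

def nu0 : ℕ → ℕ := fun n => if n % 4 = 0 then n / 2 else if n % 4 = 2 then 1 else n + 2

lemma nf0_surj : Surjective nf0 := by
  intro m
  rcases m with _ | m
  · exact ⟨0, by simp [nf0]⟩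
  · exact ⟨2 * m + 1, by simp only [nf0]; split_ifs <;> first | omega | tauto⟩

lemma ng0_surj : Surjective ng0 := by
  intro m
  match m with
  | 0 => exact ⟨0, by simp [ng0]⟩
  | 1 => exact ⟨2, by simp [ng0]⟩
  | (m + 2) => exact ⟨2 * m + 1, by simp only [ng0]; split_ifs <;> first | omega | tauto⟩

lemma nh0_surj : Surjective nh0 := by
  intro m
  rcases m with _ | m
  · exact ⟨0, by simp [nh0]⟩
  · exact ⟨m + 2, by simp only [nh0]; split_ifs <;> first | omega | tauto⟩

lemma nu0_surj : Surjective nu0 := by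
  intro m
  rcases Nat.even_or_odd m with ⟨j, hj⟩ | ⟨j, hj⟩
  · exact ⟨2 * m, by simp only [nu0]; split_ifs <;> first | omega | tauto⟩
  · rcases j with _ | j
    · exact ⟨2, by simp [nu0]; omega⟩
    · exact ⟨2 * j + 1, by simp only [nu0]; split_ifs <;> first | omega | tauto⟩

lemma nf0_eq : nf0 = nh0 ∘ ng0 := by
  funext n
  simp only [nf0, ng0, nh0, comp_apply]
  split_ifs <;> first | omega | tauto

lemma ng0_eq : ng0 = nf0 ∘ nu0 := by
  funext n
  simp only [nf0, ng0, nu0, comp_apply]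
  split_ifs <;> first | omega | tauto

open Classical in
noncomputable def liftMap (cc : ℕ → X) (s : ℕ → ℕ) : X → X :=
  fun x => if h : ∃ n, cc n = x then cc (s h.choose) else x

lemma liftMap_cc {cc : ℕ → X} (hcc : Injective cc) (s : ℕ → ℕ) (n : ℕ) :
    liftMap cc s (cc n) = cc (s n) := by
  have h : ∃ m, cc m = cc n := ⟨n, rfl⟩
  have e : liftMap cc s (cc n) = cc (s h.choose) := dif_pos h
  rw [e, hcc h.choose_spec]

lemma liftMap_not {cc : ℕ → X} (s : ℕ → ℕ) (x : X) (hx : ¬ ∃ n, cc n = x) :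
    liftMap cc s x = x := dif_neg hx

lemma liftMap_comp {cc : ℕ → X} (hcc : Injective cc) (s t : ℕ → ℕ) :
    liftMap cc (s ∘ t) = liftMap cc s ∘ liftMap cc t := by
  funext x
  by_cases hx : ∃ n, cc n = x
  · obtain ⟨n, rfl⟩ := hx
    rw [comp_apply, liftMap_cc hcc, liftMap_cc hcc, liftMap_cc hcc]
    rfl
  · rw [comp_apply, liftMap_not _ _ hx, liftMap_not _ _ hx, liftMap_not _ _ hx]

lemma liftMap_omega {cc : ℕ → X} (hcc : Injective cc) (hccY : ∀ n, cc n ∈ Y)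
    {s : ℕ → ℕ} (hs : Surjective s) : OmegaBar Y (liftMap cc s) := by
  apply Set.Subset.antisymm
  · rintro _ ⟨y, hy, rfl⟩
    by_cases hx : ∃ n, cc n = y
    · obtain ⟨n, rfl⟩ := hx
      rw [liftMap_cc hcc]
      exact hccY _
    · rw [liftMap_not _ _ hx]
      exact hy
  · intro z hz
    by_cases hx : ∃ n, cc n = z
    · obtain ⟨n, rfl⟩ := hx
      obtain ⟨m, hm⟩ := hs n
      exact ⟨cc m, hccY m, by rw [liftMap_cc hcc, hm]⟩
    · exact ⟨z, hz, liftMap_not _ _ hx⟩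

end Aux

theorem stmt_17 {X : Type*} [Nonempty X] (Y : Set X) (hY : Y.Nonempty) :
    (∀ f g : X → X, OmegaBar Y f → OmegaBar Y g → (GreenD Y f g ↔ GreenJ Y f g))
      ↔ Y.Finite := by
  classical
  constructor
  · intro H
    by_contra hfin
    have hinf : Y.Infinite := hfin
    set c := hinf.natEmbedding with hc
    set cc : ℕ → X := fun n => (c n : X) with hccdef
    have hcc : Injective cc := fun a b hab => c.injective (Subtype.ext hab)
    have hccY : ∀ n, cc n ∈ Y := fun n => (c n).2
    set f : X → X := liftMap cc nf0 with hfdef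
    set g : X → X := liftMap cc ng0 with hgdef
    have hfΩ : OmegaBar Y f := liftMap_omega hcc hccY nf0_surj
    have hgΩ : OmegaBar Y g := liftMap_omega hcc hccY ng0_surj
    have hJ : GreenJ Y f g := by
      constructor
      · refine ⟨id, liftMap cc nh0, omegaBar_id, liftMap_omega hcc hccY nh0_surj, ?_⟩
        have : liftMap cc nf0 = liftMap cc nh0 ∘ liftMap cc ng0 := by
          rw [← liftMap_comp hcc, ← nf0_eq]
        exact this
      · refine ⟨liftMap cc nu0, id, liftMap_omega hcc hccY nu0_surj, omegaBar_id, ?_⟩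
        have : liftMap cc ng0 = liftMap cc nf0 ∘ liftMap cc nu0 := by
          rw [← liftMap_comp hcc, ← ng0_eq]
        exact this
    have hD : GreenD Y f g := (H f g hfΩ hgΩ).mpr hJ
    obtain ⟨k, hkΩ, ⟨⟨h, hhΩ, hfkh⟩, _⟩, ⟨⟨p, _, hkpg⟩, ⟨q, _, hgqk⟩⟩⟩ := hD
    have hker : ∀ x x', g x = g x' → k x = k x' := by
      intro x x' e
      rw [hkpg]
      simp only [comp_apply, e]
    have hker' : ∀ x x', k x = k x' → g x = g x' := by
      intro x x' e
      rw [hgqk]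
      simp only [comp_apply, e]
    -- any infinite fiber of f has value cc 0
    have key : ∀ v : X, {x : X | f x = v}.Infinite → v = cc 0 := by
      intro v hv
      have h1 : {x : X | f x = v} \ Set.range cc ⊆ {v} := by
        rintro x ⟨hx1, hx2⟩
        have : f x = x := liftMap_not _ _ (fun ⟨n, hn⟩ => hx2 ⟨n, hn⟩)
        rw [← hx1, this]
        rfl
      have h2 : ({x : X | f x = v} ∩ Set.range cc).Infinite := by
        refine Set.Infinite.mono ?_ (hv.diff (Set.finite_singleton v))
        rintro x ⟨hx1, hx2⟩
        by_cases hr : x ∈ Set.range cc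
        · exact ⟨hx1, hr⟩
        · exact absurd (h1 ⟨hx1, hr⟩) hx2
      set N : Set ℕ := {n | f (cc n) = v} with hN
      have himg : cc '' N = {x : X | f x = v} ∩ Set.range cc := by
        apply Set.Subset.antisymm
        · rintro _ ⟨n, hn, rfl⟩
          exact ⟨hn, ⟨n, rfl⟩⟩
        · rintro x ⟨hx1, ⟨n, rfl⟩⟩
          exact ⟨n, hx1, rfl⟩
      have hNinf : N.Infinite := Set.Infinite.of_image cc (by rw [himg]; exact h2)
      obtain ⟨n₀, hn₀⟩ := hNinf.nonempty
      have hv0 : cc (nf0 n₀) = v := by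
        rw [← hn₀]
        exact (liftMap_cc hcc nf0 n₀).symm
      by_cases hm : nf0 n₀ = 0
      · rw [← hv0, hm]
      · exfalso
        apply hNinf
        apply Set.Finite.subset (Set.finite_singleton n₀)
        intro n hn
        have hfn : cc (nf0 n) = v := by
          rw [← hn]
          exact (liftMap_cc hcc nf0 n).symm
        have heq : nf0 n = nf0 n₀ := hcc (hfn.trans hv0.symm)
        simp only [Set.mem_singleton_iff]
        simp only [nf0] at heq hm
        split_ifs at heq hm <;> omega
    -- main: elements whose g-class contains a fixed residue class have k-value cc 0
    have main : ∀ (r : ℕ), r < 4 → ∀ (a : X), (∀ n, n % 4 = r → g (cc n) = g a) →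
        k a = cc 0 := by
      intro r hr a hga
      apply key (k a)
      apply Set.Infinite.of_image h
      refine Set.Infinite.mono ?_
        (Set.infinite_of_injective_forall_mem
          (s := cc '' {n | n % 4 = r})
          (f := fun j : ℕ => cc (4 * j + r))
          (fun a b hab => by have := hcc hab; omega)
          (fun j => ⟨4 * j + r, by simp only [Set.mem_setOf_eq]; omega, rfl⟩))
      rintro _ ⟨n, hn, rfl⟩
      have hz : cc n ∈ h '' Y := by rw [hhΩ]; exact hccY n
      obtain ⟨w, hw, hwz⟩ := hz
      refine ⟨w, ?_, hwz⟩
      show f w = k a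
      have : f w = k (h w) := congrFun hfkh w
      rw [this, hwz]
      exact hker _ _ (hga n hn)
    have e0 : k (cc 0) = cc 0 := by
      apply main 0 (by omega)
      intro n hn
      rw [hgdef, liftMap_cc hcc, liftMap_cc hcc]
      have : ng0 n = ng0 0 := by simp only [ng0]; split_ifs <;> first | omega | tauto
      rw [this]
    have e2 : k (cc 2) = cc 0 := by
      apply main 2 (by omega)
      intro n hn
      rw [hgdef, liftMap_cc hcc, liftMap_cc hcc]
      have : ng0 n = ng0 2 := by simp only [ng0]; split_ifs <;> first | omega | tauto
      rw [this]
    have : g (cc 0) = g (cc 2) := hker' _ _ (e0.trans e2.symm)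
    rw [hgdef, liftMap_cc hcc, liftMap_cc hcc] at this
    have h02 : ng0 0 = ng0 2 := hcc this
    norm_num [ng0] at h02
  · intro hfin f g hf hg
    exact ⟨greenD_to_greenJ, J_to_D hfin hf hg⟩
end

section
/- Let A be an infinite set and α, β surjective self-maps of A. Define N(α) = {a ∈ A : |α^{-1}(a)| < |A|} and n(α) = |N(α)|. Then n(α ∘ β) ≤ min(n(α), n(β)) (here the composite maps x to β(α(x)) in left-to-right notation αβ). -/
/-- n(α) = cardinality of {a : |α⁻¹(a)| < |A|}. -/
noncomputable def nSmallFibers {A : Type*} (α : A → A) : Cardinal :=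
  Cardinal.mk ↥{a : A | Cardinal.mk ↥(α ⁻¹' {a}) < Cardinal.mk A}

theorem stmt_18 {A : Type*} [Infinite A] (α β : A → A)
    (hα : Function.Surjective α) (hβ : Function.Surjective β) :
    nSmallFibers (β ∘ α) ≤ min (nSmallFibers α) (nSmallFibers β) := by
  unfold nSmallFibers
  refine le_min ?_ ?_
  · -- injection: a ↦ some b with β b = a; b ∈ N(α)
    choose g hg using hβ
    refine Cardinal.mk_le_of_injective (f := fun a =>
      ⟨g a.1, ?_⟩) ?_
    · -- α⁻¹{g a} ⊆ (β∘α)⁻¹{a}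
      have hsub : α ⁻¹' {g a.1} ⊆ (β ∘ α) ⁻¹' {a.1} := by
        intro x hx
        simp only [Set.mem_preimage, Set.mem_singleton_iff] at hx ⊢
        simp [Function.comp, hx, hg]
      exact lt_of_le_of_lt (Cardinal.mk_le_mk_of_subset hsub) a.2
    · intro a b hab
      have : g a.1 = g b.1 := congrArg Subtype.val hab
      have := congrArg β this
      rw [hg, hg] at this
      exact Subtype.ext this
  · -- N(β∘α) ⊆ N(β): β⁻¹{a} embeds into (β∘α)⁻¹{a} via a section of α
    refine Cardinal.mk_le_mk_of_subset ?_
    intro a ha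
    simp only [Set.mem_setOf_eq] at ha ⊢
    choose s hs using hα
    have hinj : Function.Injective (fun b : ↥(β ⁻¹' {a}) =>
        (⟨s b.1, by
          have hb := b.2
          simp only [Set.mem_preimage, Set.mem_singleton_iff] at hb ⊢
          simp [Function.comp, hs, hb]⟩ : ↥((β ∘ α) ⁻¹' {a}))) := by
      intro x y hxy
      have : s x.1 = s y.1 := congrArg Subtype.val hxy
      have := congrArg α this
      rw [hs, hs] at this
      exact Subtype.ext this
    exact lt_of_le_of_lt (Cardinal.mk_le_of_injective hinj) ha
end

section
/- Let Y be an infinite nonempty subset of X. Then the kernel (unique minimal two-sided ideal) of the semigroup Ω̄(X,Y) = {f : X → X : f(Y) = Y} exists and equals J(0,0) = {f ∈ Ω̄(X,Y) : f(X) ⊆ Y and every fiber of f|_Y : Y → Y has cardinality |Y|}. -/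
/-- An ideal of the semigroup Ω̄(X,Y): a nonempty subset of Ω̄(X,Y) closed under
multiplication (on either side) by elements of Ω̄(X,Y). -/
def IsIdeal {X : Type*} (Y : Set X) (I : Set (X → X)) : Prop :=
  I.Nonempty ∧ (∀ f ∈ I, OmegaBar Y f) ∧
  ∀ f ∈ I, ∀ s : X → X, OmegaBar Y s → (s ∘ f ∈ I ∧ f ∘ s ∈ I)

section Aux

variable {X : Type*} {Y : Set X}

private lemma mem_of_omega {s : X → X} (hs : OmegaBar Y s) {x : X} (hx : x ∈ Y) :
    s x ∈ Y := by
  have : s x ∈ s '' Y := Set.mem_image_of_mem s hx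
  rwa [hs] at this

private lemma mk_eq_of_le {S : Set X} (hSY : S ⊆ Y)
    (h : Cardinal.mk ↥Y ≤ Cardinal.mk ↥S) :
    Cardinal.mk ↥S = Cardinal.mk ↥Y :=
  le_antisymm (Cardinal.mk_le_mk_of_subset hSY) h

/-- J(0,0) is nonempty. -/
private lemma J_nonempty (hY : Y.Nonempty) (hinf : Y.Infinite) :
    ∃ f : X → X, OmegaBar Y f ∧ Set.range f ⊆ Y ∧
      ∀ y ∈ Y, Cardinal.mk ↥{w ∈ Y | f w = y} = Cardinal.mk ↥Y := by
  classical
  haveI : Infinite ↥Y := hinf.to_subtype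
  obtain ⟨y₀, hy₀⟩ := hY
  have hcard : Cardinal.mk (↥Y × ↥Y) = Cardinal.mk ↥Y := by
    simp only [Cardinal.mk_prod, Cardinal.lift_id]
    exact Cardinal.mul_eq_self (Cardinal.infinite_iff.mp ‹Infinite ↥Y›)
  obtain ⟨e⟩ := Cardinal.eq.mp hcard
  -- e : ↥Y × ↥Y ≃ ↥Y ; use e.symm
  refine ⟨fun x => if h : x ∈ Y then ((e.symm ⟨x, h⟩).2 : X) else y₀, ?_, ?_, ?_⟩
  · apply Set.Subset.antisymm
    · rintro _ ⟨x, hx, rfl⟩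
      simp only [dif_pos hx]
      exact (e.symm ⟨x, hx⟩).2.2
    · intro y hy
      refine ⟨(e (⟨y, hy⟩, ⟨y, hy⟩) : X), (e (⟨y, hy⟩, ⟨y, hy⟩)).2, ?_⟩
      simp only [dif_pos (e (⟨y, hy⟩, ⟨y, hy⟩)).2, Subtype.coe_eta,
        Equiv.symm_apply_apply]
  · rintro _ ⟨x, rfl⟩
    by_cases h : x ∈ Y
    · simp only [dif_pos h]; exact (e.symm ⟨x, h⟩).2.2
    · simp only [dif_neg h]; exact hy₀
  · intro y hy
    apply mk_eq_of_le (fun w hw => hw.1)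
    refine Cardinal.mk_le_of_injective (f := fun z : ↥Y =>
      (⟨(e (z, ⟨y, hy⟩) : X), (e (z, ⟨y, hy⟩)).2, ?_⟩ :
        ↥{w ∈ Y | (if h : w ∈ Y then ((e.symm ⟨w, h⟩).2 : X) else y₀) = y})) ?_
    · simp only [dif_pos (e (z, ⟨y, hy⟩)).2, Subtype.coe_eta, Equiv.symm_apply_apply]
    · intro z₁ z₂ h
      have h1 := Subtype.ext_iff.mp h
      have h2 := e.injective (Subtype.coe_injective h1)
      exact (Prod.ext_iff.mp h2).1

/-- J(0,0) is an ideal. -/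
private lemma J_ideal (hY : Y.Nonempty) (hinf : Y.Infinite) :
    IsIdeal Y {f : X → X | OmegaBar Y f ∧ Set.range f ⊆ Y ∧
      ∀ y ∈ Y, Cardinal.mk ↥{w ∈ Y | f w = y} = Cardinal.mk ↥Y} := by
  obtain ⟨f₀, hf₀⟩ := J_nonempty hY hinf
  refine ⟨⟨f₀, hf₀⟩, fun f hf => hf.1, ?_⟩
  rintro f ⟨hf1, hf2, hf3⟩ s hs
  constructor
  · refine ⟨?_, ?_, ?_⟩
    · show (s ∘ f) '' Y = Y
      rw [Set.image_comp, hf1, hs]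
    · rintro _ ⟨x, rfl⟩
      exact mem_of_omega hs (hf2 ⟨x, rfl⟩)
    · intro y hy
      apply mk_eq_of_le (fun w hw => hw.1)
      -- find z ∈ Y with s z = y
      have : y ∈ s '' Y := by rw [hs]; exact hy
      obtain ⟨z, hz, hzy⟩ := this
      calc Cardinal.mk ↥Y = Cardinal.mk ↥{w ∈ Y | f w = z} := (hf3 z hz).symm
        _ ≤ Cardinal.mk ↥{w ∈ Y | (s ∘ f) w = y} := by
            apply Cardinal.mk_le_mk_of_subset
            rintro w ⟨hw, hfw⟩
            exact ⟨hw, by simp [Function.comp, hfw, hzy]⟩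
  · refine ⟨?_, ?_, ?_⟩
    · show (f ∘ s) '' Y = Y
      rw [Set.image_comp, hs, hf1]
    · rintro _ ⟨x, rfl⟩
      exact hf2 ⟨s x, rfl⟩
    · intro y hy
      apply mk_eq_of_le (fun w hw => hw.1)
      rw [← hf3 y hy]
      -- surjection from {w ∈ Y | f (s w) = y} onto {w ∈ Y | f w = y} via s
      refine Cardinal.mk_le_of_surjective (f := fun w : ↥{w ∈ Y | (f ∘ s) w = y} =>
        (⟨s w, mem_of_omega hs w.2.1, w.2.2⟩ : ↥{w ∈ Y | f w = y})) ?_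
      rintro ⟨v, hv, hfv⟩
      have : v ∈ s '' Y := by rw [hs]; exact hv
      obtain ⟨w, hw, hwv⟩ := this
      exact ⟨⟨w, hw, by simp [Function.comp, hwv, hfv]⟩, by simp [hwv]⟩

/-- Minimality: J(0,0) is contained in every ideal. -/
private lemma J_min (hY : Y.Nonempty) (hinf : Y.Infinite)
    (I : Set (X → X)) (hI : IsIdeal Y I) :
    {f : X → X | OmegaBar Y f ∧ Set.range f ⊆ Y ∧
      ∀ y ∈ Y, Cardinal.mk ↥{w ∈ Y | f w = y} = Cardinal.mk ↥Y} ⊆ I := by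
  classical
  obtain ⟨⟨g, hgI⟩, hIΩ, hIcl⟩ := hI
  have hg : OmegaBar Y g := hIΩ g hgI
  rintro f ⟨hf1, hf2, hf3⟩
  -- A u : preimage of u under g within Y; B u : fiber of f over u within Y
  set A : X → Set X := fun u => {z ∈ Y | g z = u} with hA
  set B : X → Set X := fun u => {w ∈ Y | f w = u} with hB
  have hAB : ∀ u, Cardinal.mk ↥(A u) ≤ Cardinal.mk ↥(B u) := by
    intro u
    by_cases hu : u ∈ Y
    · calc Cardinal.mk ↥(A u) ≤ Cardinal.mk ↥Y :=
            Cardinal.mk_le_mk_of_subset (fun z hz => hz.1)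
        _ = Cardinal.mk ↥(B u) := (hf3 u hu).symm
    · have hAe : A u = ∅ := by
        ext z
        simp only [hA, Set.mem_setOf_eq, Set.mem_empty_iff_false, iff_false, not_and]
        intro hz hgz
        exact hu (hgz ▸ mem_of_omega hg hz)
      rw [hAe, Cardinal.mk_emptyCollection]
      exact zero_le
  -- choose embeddings fiberwise
  have ι : ∀ u : X, ↥(A u) ↪ ↥(B u) := fun u =>
    Classical.choice ((Cardinal.le_def _ _).mp (hAB u))
  have ιcast : ∀ (u v : X) (huv : u = v) (z : X) (hzu : z ∈ A u) (hzv : z ∈ A v),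
      ((ι u ⟨z, hzu⟩ : ↥(B u)) : X) = ((ι v ⟨z, hzv⟩ : ↥(B v)) : X) := by
    intro u v huv z hzu hzv
    subst huv
    rfl
  -- W : the injection from Y into the fibers of f
  set W : ↥Y → X := fun z => ((ι (g ↑z)) ⟨↑z, z.2, rfl⟩ : X) with hW
  have hWmem : ∀ z : ↥Y, W z ∈ B (g ↑z) := fun z => ((ι (g ↑z)) ⟨↑z, z.2, rfl⟩).2
  have hWY : ∀ z : ↥Y, W z ∈ Y := fun z => (hWmem z).1
  have hWf : ∀ z : ↥Y, f (W z) = g ↑z := fun z => (hWmem z).2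
  have hWinj : Function.Injective W := by
    intro z₁ z₂ h
    have e : g ↑z₁ = g ↑z₂ := by rw [← hWf z₁, ← hWf z₂, h]
    have h2 : ((ι (g ↑z₂)) ⟨↑z₁, z₁.2, e⟩ : X) = ((ι (g ↑z₂)) ⟨↑z₂, z₂.2, rfl⟩ : X) := by
      rw [← ιcast (g ↑z₁) (g ↑z₂) e ↑z₁ ⟨z₁.2, rfl⟩ ⟨z₁.2, e⟩]
      exact h
    have h3 := (ι (g ↑z₂)).injective (Subtype.coe_injective h2)
    have h4 := Subtype.ext_iff.mp h3
    exact Subtype.ext h4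
  -- section t of g over Y
  have hsec : ∀ u, u ∈ Y → ∃ z, z ∈ Y ∧ g z = u := by
    intro u hu
    have : u ∈ g '' Y := by rw [hg]; exact hu
    obtain ⟨z, hz, hzu⟩ := this
    exact ⟨z, hz, hzu⟩
  choose t ht1 ht2 using hsec
  -- define b
  set b : X → X := fun x =>
    if h : ∃ z : ↥Y, W z = x then ↑h.choose
    else if hx : f x ∈ Y then t (f x) hx else x with hb
  have hbW : ∀ z : ↥Y, b (W z) = ↑z := by
    intro z
    have hex : ∃ z' : ↥Y, W z' = W z := ⟨z, rfl⟩
    simp only [hb, dif_pos hex]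
    exact congrArg Subtype.val (hWinj hex.choose_spec)
  have hgb : g ∘ b = f := by
    funext x
    by_cases h : ∃ z : ↥Y, W z = x
    · simp only [Function.comp, hb, dif_pos h]
      have := hWf h.choose
      rw [h.choose_spec] at this
      exact this.symm
    · have hfx : f x ∈ Y := hf2 ⟨x, rfl⟩
      simp only [Function.comp, hb, dif_neg h, dif_pos hfx]
      exact ht2 (f x) hfx
  have hbΩ : OmegaBar Y b := by
    apply Set.Subset.antisymm
    · rintro _ ⟨x, hx, rfl⟩
      by_cases h : ∃ z : ↥Y, W z = x
      · simp only [hb, dif_pos h]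
        exact h.choose.2
      · have hfx : f x ∈ Y := hf2 ⟨x, rfl⟩
        simp only [hb, dif_neg h, dif_pos hfx]
        exact ht1 (f x) hfx
    · intro y hy
      exact ⟨W ⟨y, hy⟩, hWY ⟨y, hy⟩, hbW ⟨y, hy⟩⟩
  have := (hIcl g hgI b hbΩ).2
  rwa [hgb] at this

end Aux

theorem stmt_19 {X : Type*} (Y : Set X) (hY : Y.Nonempty) (hinf : Y.Infinite) :
    IsIdeal Y {f : X → X | OmegaBar Y f ∧ Set.range f ⊆ Y ∧
        ∀ y ∈ Y, Cardinal.mk ↥{w ∈ Y | f w = y} = Cardinal.mk ↥Y} ∧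
    ∀ I : Set (X → X), IsIdeal Y I →
      {f : X → X | OmegaBar Y f ∧ Set.range f ⊆ Y ∧
        ∀ y ∈ Y, Cardinal.mk ↥{w ∈ Y | f w = y} = Cardinal.mk ↥Y} ⊆ I := by
  exact ⟨J_ideal hY hinf, fun I hI => J_min hY hinf I hI⟩
end
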